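/- arXiv:0906.3723 — 3 statements merged into one kernel-verified Lean document; each statement's English description precedes it below -/
import Mathlib

section
/- A permutation class C is monotone griddable if and only if C contains neither the class ⊕21 nor the class ⊖12, i.e. neither ⊕21 ⊆ C nor ⊖12 ⊆ C. -/
/-! Core definitions: finite permutations, pattern containment, permutation
classes, partial well-order, monotone classes, simple permutations,
direct/skew sums, grid classes and the graph of a gridding matrix. -/

/-- A finite permutation: a length `n` together with a bijection of `Fin n`. -/
abbrev Perm' : Type := Σ n : ℕ, Equiv.Perm (Fin n)

namespace Perm'

/-- Pattern containment: `σ.Le π` means that `σ` is contained in `π`,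
i.e. some subsequence of `π` is order isomorphic to `σ`. -/
def Le (σ π : Perm') : Prop :=
  ∃ f : Fin σ.1 → Fin π.1, StrictMono f ∧
    ∀ a b : Fin σ.1, (σ.2 a < σ.2 b ↔ π.2 (f a) < π.2 (f b))

/-- The inverse of a permutation. -/
def inverse (π : Perm') : Perm' := ⟨π.1, π.2.symm⟩

/-- The reverse of a permutation: `r(π)(i) = π(k+1-i)`. -/
def reverse (π : Perm') : Perm' := ⟨π.1, Fin.revPerm.trans π.2⟩

/-- The complement of a permutation: `c(π)(i) = k+1-π(i)`. -/
def complement (π : Perm') : Perm' := ⟨π.1, π.2.trans Fin.revPerm⟩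

/-- The direct sum `σ ⊕ τ` of two permutations. -/
def dsum (σ τ : Perm') : Perm' :=
  ⟨σ.1 + τ.1, finSumFinEquiv.symm.trans ((Equiv.sumCongr σ.2 τ.2).trans finSumFinEquiv)⟩

/-- The skew sum `σ ⊖ τ` of two permutations. -/
def skewSum (σ τ : Perm') : Perm' :=
  ⟨σ.1 + τ.1, finSumFinEquiv.symm.trans ((Equiv.sumCongr σ.2 τ.2).trans
    ((Equiv.sumComm (Fin σ.1) (Fin τ.1)).trans
      (finSumFinEquiv.trans (finCongr (Nat.add_comm τ.1 σ.1)))))⟩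

end Perm'

/-- The empty permutation. -/
def emptyPerm : Perm' := ⟨0, 1⟩

/-- The permutation 12. -/
def perm12 : Perm' := ⟨2, 1⟩

/-- The permutation 21. -/
def perm21 : Perm' := ⟨2, Equiv.swap 0 1⟩

/-- A permutation class: a set of permutations closed downward under containment. -/
def IsPermClass (C : Set Perm') : Prop := ∀ π ∈ C, ∀ σ : Perm', σ.Le π → σ ∈ C

/-- An antichain: a set of pairwise incomparable permutations. -/
def IsPermAntichain (A : Set Perm') : Prop := ∀ α ∈ A, ∀ β ∈ A, α ≠ β → ¬ α.Le β

/-- A set of permutations is partially well-ordered if it contains no infinite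
antichain. (Note that pairwise incomparability forces injectivity of `g`.) -/
def IsPwo (C : Set Perm') : Prop :=
  ¬ ∃ g : ℕ → Perm', (∀ i, g i ∈ C) ∧ ∀ i j : ℕ, i ≠ j → ¬ (g i).Le (g j)

/-- `Av(21)`: the class of increasing permutations. -/
def Av21 : Set Perm' := {π | ∀ a b : Fin π.1, a ≤ b → π.2 a ≤ π.2 b}

/-- `Av(12)`: the class of decreasing permutations. -/
def Av12 : Set Perm' := {π | ∀ a b : Fin π.1, a ≤ b → π.2 b ≤ π.2 a}

/-- The monotone classes. -/
def IsMonotoneClass (C : Set Perm') : Prop := C = Av21 ∨ C = Av12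

/-- A permutation is simple if it has no interval of size strictly between 1 and
its length: whenever the set of positions `[a,b]` is mapped onto a contiguous
set of values, either `a = b` or `[a,b]` is everything. -/
def IsSimple (π : Perm') : Prop :=
  ∀ a b : Fin π.1, a ≤ b →
    (∃ c : ℕ, ∀ i : Fin π.1,
      ((a ≤ i ∧ i ≤ b) ↔ (c ≤ (π.2 i : ℕ) ∧ (π.2 i : ℕ) ≤ c + ((b : ℕ) - (a : ℕ))))) →
    (a = b ∨ (b : ℕ) - (a : ℕ) + 1 = π.1)

/-- The class `⊕21` of all direct sums of patterns of `21`. -/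
def sumClosure21 : Set Perm' :=
  {π | ∃ L : List Perm', (∀ α ∈ L, α.Le perm21) ∧ π = L.foldr Perm'.dsum emptyPerm}

/-- The class `⊖12` of all skew sums of patterns of `12`. -/
def skewClosure12 : Set Perm' :=
  {π | ∃ L : List Perm', (∀ α ∈ L, α.Le perm12) ∧ π = L.foldr Perm'.skewSum emptyPerm}

/-- The set of points of `π` indexed by `S` is order isomorphic to `τ`. -/
def IsPatternOf (π : Perm') (S : Set (Fin π.1)) (τ : Perm') : Prop :=
  ∃ g : Fin τ.1 → Fin π.1, StrictMono g ∧ (∀ a, g a ∈ S) ∧ (∀ i ∈ S, ∃ a, g a = i) ∧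
    ∀ a b : Fin τ.1, (τ.2 a < τ.2 b ↔ π.2 (g a) < π.2 (g b))

/-- A gridding of a permutation `π` into an `m × n` grid, recorded as the induced
cell assignment `κ` of the points of `π`: columns are weakly increasing in
position and rows weakly increasing in value.  (This is equivalent to recording
the `m-1` vertical and `n-1` horizontal dividing lines.) -/
def IsGridding {m n : ℕ} (π : Perm') (κ : Fin π.1 → Fin m × Fin n) : Prop :=
  (∀ i i' : Fin π.1, i ≤ i' → (κ i).1 ≤ (κ i').1) ∧
  (∀ i i' : Fin π.1, π.2 i ≤ π.2 i' → (κ i).2 ≤ (κ i').2)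

/-- An `M`-gridding: a gridding in which the content of each cell `(s,t)` is
empty or order isomorphic to a member of `M s t`. -/
def IsMGridding {m n : ℕ} (M : Fin m → Fin n → Set Perm') (π : Perm')
    (κ : Fin π.1 → Fin m × Fin n) : Prop :=
  IsGridding π κ ∧
  ∀ s : Fin m, ∀ t : Fin n,
    (∀ i, κ i ≠ (s, t)) ∨ ∃ τ ∈ M s t, IsPatternOf π {i | κ i = (s, t)} τ

/-- `π` is `M`-griddable. -/
def Griddable {m n : ℕ} (M : Fin m → Fin n → Set Perm') (π : Perm') : Prop :=
  ∃ κ, IsMGridding M π κ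

/-- The grid class of `M`: all `M`-griddable permutations. -/
def GridClass {m n : ℕ} (M : Fin m → Fin n → Set Perm') : Set Perm' :=
  {π | Griddable M π}

/-- A gridding matrix: every entry is an infinite permutation class or empty. -/
def IsGriddingMatrix {m n : ℕ} (M : Fin m → Fin n → Set Perm') : Prop :=
  ∀ i j, (IsPermClass (M i j) ∧ (M i j).Infinite) ∨ M i j = ∅

/-- The non-empty cells of `M`: the vertices of the graph of `M`. -/
def GridCell {m n : ℕ} (M : Fin m → Fin n → Set Perm') : Type :=
  {p : Fin m × Fin n // M p.1 p.2 ≠ ∅}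

/-- Adjacency for the graph of `M`: two cells sharing a row or a column with
only empty cells in between. -/
def GridAdj {m n : ℕ} (M : Fin m → Fin n → Set Perm') (p q : Fin m × Fin n) : Prop :=
  p ≠ q ∧
  ((p.2 = q.2 ∧ ∀ i : Fin m, min p.1 q.1 < i → i < max p.1 q.1 → M i p.2 = ∅) ∨
   (p.1 = q.1 ∧ ∀ j : Fin n, min p.2 q.2 < j → j < max p.2 q.2 → M p.1 j = ∅))

/-- The graph `G_M` of a gridding matrix `M`. -/
def gridGraph {m n : ℕ} (M : Fin m → Fin n → Set Perm') : SimpleGraph (GridCell M) where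
  Adj p q := GridAdj M p.1 q.1
  symm := by
    constructor
    rintro ⟨p, hp⟩ ⟨q, hq⟩ ⟨hne, h⟩
    refine ⟨Ne.symm hne, ?_⟩
    rcases h with ⟨h2, hb⟩ | ⟨h1, hb⟩
    · exact Or.inl ⟨h2.symm, fun i hi hi' => by
        rw [← h2]; exact hb i (by rwa [min_comm]) (by rwa [max_comm])⟩
    · exact Or.inr ⟨h1.symm, fun j hj hj' => by
        rw [← h1]; exact hb j (by rwa [min_comm]) (by rwa [max_comm])⟩
  loopless := by constructor; rintro ⟨p, hp⟩ ⟨hne, h⟩; exact hne rfl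

/-- A class is monotone griddable if it is griddable by some matrix all of whose
entries are monotone classes or empty. -/
def MonotoneGriddable (C : Set Perm') : Prop :=
  ∃ (m n : ℕ) (M : Fin m → Fin n → Set Perm'),
    (∀ i j, IsMonotoneClass (M i j) ∨ M i j = ∅) ∧ ∀ π ∈ C, Griddable M π

namespace HVG

lemma exists_step {Q : ℕ → Prop} : ∀ {b a : ℕ}, a ≤ b → ¬ Q a → Q b →
    ∃ y, a ≤ y ∧ y < b ∧ ¬ Q y ∧ Q (y+1) := by
  intro b
  induction b with
  | zero =>
    intro a hab ha hb
    have : a = 0 := by omega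
    exact absurd hb (this ▸ ha)
  | succ b ih =>
    intro a hab ha hb
    rcases Nat.eq_or_lt_of_le hab with h | h
    · exact absurd hb (h ▸ ha)
    · by_cases hB : Q b
      · obtain ⟨y, h1, h2, h3, h4⟩ := ih (by omega) ha hB
        exact ⟨y, h1, by omega, h3, h4⟩
      · exact ⟨b, by omega, by omega, hB, hb⟩

variable {N : ℕ}

def Ch21 (w : Fin N → Fin N) (P : Fin N → Prop) (k : ℕ) : Prop :=
  ∃ c : Fin k → Fin N × Fin N,
    (∀ s, P (c s).1 ∧ P (c s).2 ∧ ((c s).1 : ℕ) < ((c s).2 : ℕ) ∧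
      (w (c s).2 : ℕ) < (w (c s).1 : ℕ)) ∧
    (∀ s t : Fin k, s < t → ((c s).2 : ℕ) < ((c t).1 : ℕ) ∧
      (w (c s).1 : ℕ) < (w (c t).2 : ℕ))

def Ch12 (w : Fin N → Fin N) (P : Fin N → Prop) (k : ℕ) : Prop :=
  ∃ c : Fin k → Fin N × Fin N,
    (∀ s, P (c s).1 ∧ P (c s).2 ∧ ((c s).1 : ℕ) < ((c s).2 : ℕ) ∧
      (w (c s).1 : ℕ) < (w (c s).2 : ℕ)) ∧
    (∀ s t : Fin k, s < t → ((c s).2 : ℕ) < ((c t).1 : ℕ) ∧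
      (w (c t).2 : ℕ) < (w (c s).1 : ℕ))

lemma Ch21.mono {w : Fin N → Fin N} {P Q : Fin N → Prop} {k : ℕ}
    (h : Ch21 w P k) (hPQ : ∀ i, P i → Q i) : Ch21 w Q k := by
  obtain ⟨c, hc, hd⟩ := h
  exact ⟨c, fun s => ⟨hPQ _ (hc s).1, hPQ _ (hc s).2.1, (hc s).2.2⟩, hd⟩

lemma Ch12.mono {w : Fin N → Fin N} {P Q : Fin N → Prop} {k : ℕ}
    (h : Ch12 w P k) (hPQ : ∀ i, P i → Q i) : Ch12 w Q k := by
  obtain ⟨c, hc, hd⟩ := h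
  exact ⟨c, fun s => ⟨hPQ _ (hc s).1, hPQ _ (hc s).2.1, (hc s).2.2⟩, hd⟩

lemma Ch21.of_le {w : Fin N → Fin N} {P : Fin N → Prop} {j k : ℕ}
    (h : Ch21 w P k) (hjk : j ≤ k) : Ch21 w P j := by
  obtain ⟨c, hc, hd⟩ := h
  exact ⟨fun s => c (Fin.castLE hjk s), fun s => hc _,
    fun s t hst => hd _ _ (by simpa using hst)⟩

lemma Ch12.of_le {w : Fin N → Fin N} {P : Fin N → Prop} {j k : ℕ}
    (h : Ch12 w P k) (hjk : j ≤ k) : Ch12 w P j := by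
  obtain ⟨c, hc, hd⟩ := h
  exact ⟨fun s => c (Fin.castLE hjk s), fun s => hc _,
    fun s t hst => hd _ _ (by simpa using hst)⟩

lemma Ch21.not_of_empty {w : Fin N → Fin N} {P : Fin N → Prop} {k : ℕ}
    (hk : 1 ≤ k) (hP : ∀ i, ¬ P i) : ¬ Ch21 w P k := by
  rintro ⟨c, hc, -⟩
  exact hP _ (hc ⟨0, hk⟩).1

lemma Ch12.not_of_empty {w : Fin N → Fin N} {P : Fin N → Prop} {k : ℕ}
    (hk : 1 ≤ k) (hP : ∀ i, ¬ P i) : ¬ Ch12 w P k := by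
  rintro ⟨c, hc, -⟩
  exact hP _ (hc ⟨0, hk⟩).1

lemma Ch21.glue {w : Fin N → Fin N} {P1 P2 P : Fin N → Prop} {a b : ℕ}
    (h1 : Ch21 w P1 a) (h2 : Ch21 w P2 b)
    (hP1 : ∀ i, P1 i → P i) (hP2 : ∀ i, P2 i → P i)
    (hpq : ∀ p q, P1 p → P2 q → p ≠ q → (p : ℕ) < (q : ℕ) ∧ (w p : ℕ) < (w q : ℕ))
    (hcorner : ∀ r, P1 r → P2 r → ∀ p, P1 p → (p : ℕ) ≤ (r : ℕ) ∧ (w p : ℕ) ≤ (w r : ℕ)) :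
    Ch21 w P (a + b) := by
  obtain ⟨c1, hc1, hd1⟩ := h1
  obtain ⟨c2, hc2, hd2⟩ := h2
  have key : ∀ s : Fin a, ¬ P2 (c1 s).1 ∧ ¬ P2 (c1 s).2 := by
    intro s
    constructor
    · intro h2'
      have h := (hcorner _ (hc1 s).1 h2' (c1 s).2 (hc1 s).2.1).1
      have := (hc1 s).2.2.1
      omega
    · intro h2'
      have h := (hcorner _ (hc1 s).2.1 h2' (c1 s).1 (hc1 s).1).2
      have := (hc1 s).2.2.2
      omega
  have cross : ∀ (p q : Fin N), P1 p → P2 q → ¬ P2 p →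
      (p : ℕ) < (q : ℕ) ∧ (w p : ℕ) < (w q : ℕ) := by
    intro p q hp hq hnp
    rcases eq_or_ne p q with rfl | hne
    · exact absurd hq hnp
    · exact hpq p q hp hq hne
  refine ⟨fun s => if h : (s : ℕ) < a then c1 ⟨s, h⟩ else c2 ⟨(s : ℕ) - a, by omega⟩, ?_, ?_⟩
  · intro s
    by_cases h : (s : ℕ) < a
    · simp only [dif_pos h]
      exact ⟨hP1 _ (hc1 _).1, hP1 _ (hc1 _).2.1, (hc1 _).2.2⟩
    · simp only [dif_neg h]
      exact ⟨hP2 _ (hc2 _).1, hP2 _ (hc2 _).2.1, (hc2 _).2.2⟩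
  · intro s t hst
    rw [Fin.lt_def] at hst
    by_cases hs : (s : ℕ) < a
    · by_cases ht : (t : ℕ) < a
      · simp only [dif_pos hs, dif_pos ht]
        exact hd1 _ _ (Fin.mk_lt_mk.mpr (by omega))
      · simp only [dif_pos hs, dif_neg ht]
        set p1 := c1 ⟨s, hs⟩ with hp1
        set q1 := c2 ⟨(t : ℕ) - a, by omega⟩ with hq1
        constructor
        · exact (cross p1.2 q1.1 (hc1 _).2.1 (hc2 _).1 (key _).2).1
        · exact (cross p1.1 q1.2 (hc1 _).1 (hc2 _).2.1 (key _).1).2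
    · by_cases ht : (t : ℕ) < a
      · omega
      · simp only [dif_neg hs, dif_neg ht]
        exact hd2 _ _ (Fin.mk_lt_mk.mpr (by omega))

lemma Ch12.glue {w : Fin N → Fin N} {P1 P2 P : Fin N → Prop} {a b : ℕ}
    (h1 : Ch12 w P1 a) (h2 : Ch12 w P2 b)
    (hP1 : ∀ i, P1 i → P i) (hP2 : ∀ i, P2 i → P i)
    (hpq : ∀ p q, P1 p → P2 q → p ≠ q → (p : ℕ) < (q : ℕ) ∧ (w q : ℕ) < (w p : ℕ))
    (hdisj : ∀ r, P1 r → P2 r → False) :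
    Ch12 w P (a + b) := by
  obtain ⟨c1, hc1, hd1⟩ := h1
  obtain ⟨c2, hc2, hd2⟩ := h2
  have cross : ∀ (p q : Fin N), P1 p → P2 q →
      (p : ℕ) < (q : ℕ) ∧ (w q : ℕ) < (w p : ℕ) := by
    intro p q hp hq
    rcases eq_or_ne p q with rfl | hne
    · exact absurd (hdisj p hp hq) not_false
    · exact hpq p q hp hq hne
  refine ⟨fun s => if h : (s : ℕ) < a then c1 ⟨s, h⟩ else c2 ⟨(s : ℕ) - a, by omega⟩, ?_, ?_⟩
  · intro s
    by_cases h : (s : ℕ) < a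
    · simp only [dif_pos h]
      exact ⟨hP1 _ (hc1 _).1, hP1 _ (hc1 _).2.1, (hc1 _).2.2⟩
    · simp only [dif_neg h]
      exact ⟨hP2 _ (hc2 _).1, hP2 _ (hc2 _).2.1, (hc2 _).2.2⟩
  · intro s t hst
    rw [Fin.lt_def] at hst
    by_cases hs : (s : ℕ) < a
    · by_cases ht : (t : ℕ) < a
      · simp only [dif_pos hs, dif_pos ht]
        exact hd1 _ _ (Fin.mk_lt_mk.mpr (by omega))
      · simp only [dif_pos hs, dif_neg ht]
        constructor
        · exact (cross _ _ (hc1 _).2.1 (hc2 _).1).1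
        · exact (cross _ _ (hc1 _).1 (hc2 _).2.1).2
    · by_cases ht : (t : ℕ) < a
      · omega
      · simp only [dif_neg hs, dif_neg ht]
        exact hd2 _ _ (Fin.mk_lt_mk.mpr (by omega))

section cut

variable {w : Fin N → Fin N} {P : Fin N → Prop} {k l : ℕ}

/-- SW region has a (k-1)-chain of 21s -/
def Aset (w : Fin N → Fin N) (P : Fin N → Prop) (k x y : ℕ) : Prop :=
  Ch21 w (fun i => P i ∧ (i : ℕ) < x ∧ (w i : ℕ) < y) (k-1)
/-- NE region has a (k-1)-chain of 21s -/
def A2set (w : Fin N → Fin N) (P : Fin N → Prop) (k x y : ℕ) : Prop :=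
  Ch21 w (fun i => P i ∧ x ≤ (i : ℕ) ∧ y ≤ (w i : ℕ)) (k-1)
/-- SE region has an (l-1)-chain of 12s -/
def B1set (w : Fin N → Fin N) (P : Fin N → Prop) (l x y : ℕ) : Prop :=
  Ch12 w (fun i => P i ∧ x ≤ (i : ℕ) ∧ (w i : ℕ) < y) (l-1)
/-- NW region has an (l-1)-chain of 12s -/
def B2set (w : Fin N → Fin N) (P : Fin N → Prop) (l x y : ℕ) : Prop :=
  Ch12 w (fun i => P i ∧ (i : ℕ) < x ∧ y ≤ (w i : ℕ)) (l-1)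

variable (hw : Function.Injective w) (hk : 2 ≤ k) (hl : 2 ≤ l)
  (h21 : ¬ Ch21 w P k) (h12 : ¬ Ch12 w P l)

include hw hk h21 in
/-- same-column crossover for the 21-chains -/
lemma cutG1 {x y : ℕ} (hA : Aset w P k x (y+1)) (hA2 : A2set w P k x y) : False := by
  apply h21
  have := Ch21.glue (P := P) hA hA2
    (fun i hi => hi.1) (fun i hi => hi.1)
    (fun p q hp hq hne => by
      constructor
      · omega
      · have : w p ≠ w q := fun h => hne (hw h)
        have : (w p : ℕ) ≠ (w q : ℕ) := fun h => this (Fin.val_injective h)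
        omega)
    (fun r hr hr2 => by omega)
  exact this.of_le (by omega)

include hw hk h21 in
/-- position-separated glue for the 21-chains -/
lemma cutG2 {x t : ℕ} (hA : Aset w P k x (t+1)) (hA2 : A2set w P k (x+1) t) : False := by
  apply h21
  have := Ch21.glue (P := P) hA hA2
    (fun i hi => hi.1) (fun i hi => hi.1)
    (fun p q hp hq hne => by
      constructor
      · omega
      · have : w p ≠ w q := fun h => hne (hw h)
        have : (w p : ℕ) ≠ (w q : ℕ) := fun h => this (Fin.val_injective h)
        omega)
    (fun r hr hr2 => by omega)
  exact this.of_le (by omega)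

include hw hk h21 in
/-- corner glue (regions share exactly one potential corner point) -/
lemma cutG3 {x t : ℕ} (hA : Aset w P k (x+1) (t+1)) (hA2 : A2set w P k x t) : False := by
  apply h21
  have := Ch21.glue (P := P) hA hA2
    (fun i hi => hi.1) (fun i hi => hi.1)
    (fun p q hp hq hne => by
      have hpv : (p : ℕ) ≠ (q : ℕ) := fun h => hne (Fin.val_injective h)
      have : w p ≠ w q := fun h => hne (hw h)
      have hwv : (w p : ℕ) ≠ (w q : ℕ) := fun h => this (Fin.val_injective h)
      omega)
    (fun r hr hr2 p hp => by omega)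
  exact this.of_le (by omega)

include hw hl h12 in
/-- cross-column glue for the 12-chains, value-separated -/
lemma cutG6 {x ya yb : ℕ} (hya : ya ≤ yb)
    (hB2 : B2set w P l (x+1) yb) (hB1 : B1set w P l x ya) : False := by
  apply h12
  have := Ch12.glue (P := P) hB2 hB1
    (fun i hi => hi.1) (fun i hi => hi.1)
    (fun p q hp hq hne => by
      have hpv : (p : ℕ) ≠ (q : ℕ) := fun h => hne (Fin.val_injective h)
      constructor
      · omega
      · omega)
    (fun r hr hr2 => by omega)
  exact this.of_le (by omega)

include hw hl h12 in
/-- same-column crossover for the 12-chains -/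
lemma cutG5 {x y : ℕ} (hB2 : B2set w P l x y) (hB1 : B1set w P l x (y+1)) : False := by
  apply h12
  have := Ch12.glue (P := P) hB2 hB1
    (fun i hi => hi.1) (fun i hi => hi.1)
    (fun p q hp hq hne => by
      have : w p ≠ w q := fun h => hne (hw h)
      have hwv : (w p : ℕ) ≠ (w q : ℕ) := fun h => this (Fin.val_injective h)
      constructor
      · omega
      · omega)
    (fun r hr hr2 => by omega)
  exact this.of_le (by omega)

include hw hl h12 in
/-- same point Λ-glue -/
lemma cutG4 {x y : ℕ} (hB2 : B2set w P l x y) (hB1 : B1set w P l x y) : False := by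
  apply h12
  have := Ch12.glue (P := P) hB2 hB1
    (fun i hi => hi.1) (fun i hi => hi.1)
    (fun p q hp hq hne => by
      constructor
      · omega
      · omega)
    (fun r hr hr2 => by omega)
  exact this.of_le (by omega)


/-- monotonicity facts for the four corner predicates -/
lemma Aset.mono {x y x' y' : ℕ} (hx : x ≤ x') (hy : y ≤ y')
    (h : Aset w P k x y) : Aset w P k x' y' :=
  Ch21.mono h (fun i hi => ⟨hi.1, by omega, by omega⟩)

lemma A2set.mono {x y x' y' : ℕ} (hx : x' ≤ x) (hy : y' ≤ y)
    (h : A2set w P k x y) : A2set w P k x' y' :=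
  Ch21.mono h (fun i hi => ⟨hi.1, by omega, by omega⟩)

lemma B1set.mono {x y x' y' : ℕ} (hx : x' ≤ x) (hy : y ≤ y')
    (h : B1set w P l x y) : B1set w P l x' y' :=
  Ch12.mono h (fun i hi => ⟨hi.1, by omega, by omega⟩)

lemma B2set.mono {x y x' y' : ℕ} (hx : x ≤ x') (hy : y' ≤ y)
    (h : B2set w P l x y) : B2set w P l x' y' :=
  Ch12.mono h (fun i hi => ⟨hi.1, by omega, by omega⟩)

include hw hk hl h21 h12 in
/-- The central cut lemma: there is a cut point all four of whose quadrants
have reduced chain complexity. -/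
lemma cut_exists :
    ∃ x y : ℕ,
      ¬ Ch21 w (fun i => P i ∧ (i : ℕ) < x ∧ (w i : ℕ) < y) (k-1) ∧
      ¬ Ch21 w (fun i => P i ∧ x ≤ (i : ℕ) ∧ y ≤ (w i : ℕ)) (k-1) ∧
      ¬ Ch12 w (fun i => P i ∧ x ≤ (i : ℕ) ∧ (w i : ℕ) < y) (l-1) ∧
      ¬ Ch12 w (fun i => P i ∧ (i : ℕ) < x ∧ y ≤ (w i : ℕ)) (l-1) := by
  by_contra hcon
  push_neg at hcon
  have cov : ∀ x y : ℕ, Aset w P k x y ∨ A2set w P k x y ∨ B1set w P l x y ∨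
      B2set w P l x y := by
    intro x y
    by_contra hc
    push_neg at hc
    exact hc.2.2.2 (hcon x y hc.1 hc.2.1 hc.2.2.1)
  have k1 : 1 ≤ k - 1 := by omega
  have l1 : 1 ≤ l - 1 := by omega
  -- boundary facts
  have fA0 : ∀ x, ¬ Aset w P k x 0 :=
    fun x => Ch21.not_of_empty k1 (fun i hi => by omega)
  have fA2N : ∀ x, ¬ A2set w P k x N :=
    fun x => Ch21.not_of_empty k1 (fun i hi => by
      have := (w i).isLt
      omega)
  have fB10 : ∀ x, ¬ B1set w P l x 0 :=
    fun x => Ch12.not_of_empty l1 (fun i hi => by omega)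
  have fB1N : ∀ y, ¬ B1set w P l N y :=
    fun y => Ch12.not_of_empty l1 (fun i hi => by
      have := i.isLt
      omega)
  have fB2_0 : ∀ y, ¬ B2set w P l 0 y :=
    fun y => Ch12.not_of_empty l1 (fun i hi => by omega)
  -- every column has a gap point
  have S1 : ∀ x, ∃ y, y ≤ N ∧ ¬ Aset w P k x y ∧ ¬ A2set w P k x y := by
    intro x
    by_contra hno
    push_neg at hno
    have hAorA2 : ∀ y, y ≤ N → Aset w P k x y ∨ A2set w P k x y := by
      intro y hy
      by_cases hA : Aset w P k x y
      · exact Or.inl hA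
      · exact Or.inr (hno y hy hA)
    have hAN : Aset w P k x N := (hAorA2 N le_rfl).resolve_right (fA2N x)
    obtain ⟨y1, -, hy1N, hnA, hA⟩ := exists_step (Q := fun y => Aset w P k x y)
      (Nat.zero_le N) (fA0 x) hAN
    have hA2 : A2set w P k x y1 := (hAorA2 y1 (by omega)).resolve_left hnA
    exact cutG1 hw hk h21 hA hA2
  -- gap point implies B1 or B2 via coverage
  have gapB : ∀ x y, ¬ Aset w P k x y → ¬ A2set w P k x y →
      B1set w P l x y ∨ B2set w P l x y := by
    intro x y h1 h2
    rcases cov x y with h | h | h | h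
    · exact absurd h h1
    · exact absurd h h2
    · exact Or.inl h
    · exact Or.inr h
  set U : ℕ → Prop := fun x => ∃ y, (¬ Aset w P k x y ∧ ¬ A2set w P k x y) ∧ B1set w P l x y
    with hU
  set D : ℕ → Prop := fun x => ∃ y, (¬ Aset w P k x y ∧ ¬ A2set w P k x y) ∧ B2set w P l x y
    with hD
  have S3 : ∀ x, U x → D x → False := by
    rintro x ⟨ya, gya, hB1⟩ ⟨yb, gyb, hB2⟩
    rcases le_or_gt ya yb with h | h
    · exact cutG4 hw hl h12 hB2 (hB1.mono le_rfl h)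
    · -- yb < ya : all of [yb, ya] is gap
      have gint : ∀ y, yb ≤ y → y ≤ ya → ¬ Aset w P k x y ∧ ¬ A2set w P k x y := by
        intro y h1 h2
        constructor
        · intro hA
          exact gya.1 (hA.mono le_rfl h2)
        · intro hA2
          exact gyb.2 (hA2.mono le_rfl h1)
      by_cases hxb : B1set w P l x yb
      · exact cutG4 hw hl h12 hB2 hxb
      · obtain ⟨y2, hy2b, hy2a, hnB1, hB1'⟩ := exists_step (Q := fun y => B1set w P l x y)
          (le_of_lt h) hxb hB1
        have hgap := gint y2 hy2b (by omega)
        have : B2set w P l x y2 := (gapB x y2 hgap.1 hgap.2).resolve_left hnB1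
        exact cutG5 hw hl h12 this hB1'
  have hUD : ∀ x, U x ∨ D x := by
    intro x
    obtain ⟨y, -, hg1, hg2⟩ := S1 x
    rcases gapB x y hg1 hg2 with h | h
    · exact Or.inl ⟨y, ⟨hg1, hg2⟩, h⟩
    · exact Or.inr ⟨y, ⟨hg1, hg2⟩, h⟩
  have hU0 : U 0 := by
    rcases hUD 0 with h | h
    · exact h
    · obtain ⟨y, -, hB2⟩ := h
      exact absurd hB2 (fB2_0 y)
  have hDN : D N := by
    rcases hUD N with h | h
    · obtain ⟨y, -, hB1⟩ := h
      exact absurd hB1 (fB1N y)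
    · exact h
  have hnD0 : ¬ D 0 := fun h => S3 0 hU0 h
  obtain ⟨x0, -, hx0N, hnD, hDx1⟩ := exists_step (Q := D) (Nat.zero_le N) hnD0 hDN
  have hUx0 : U x0 := (hUD x0).resolve_right hnD
  -- gap points at column x0 carry B1; at column x0+1 carry B2
  have hnUx1 : ¬ U (x0+1) := fun h => S3 _ h hDx1
  have gapB1x0 : ∀ y, ¬ Aset w P k x0 y → ¬ A2set w P k x0 y → B1set w P l x0 y := by
    intro y h1 h2
    rcases gapB x0 y h1 h2 with h | h
    · exact h
    · exact absurd ⟨y, ⟨h1, h2⟩, h⟩ hnD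
  have gapB2x1 : ∀ y, ¬ Aset w P k (x0+1) y → ¬ A2set w P k (x0+1) y →
      B2set w P l (x0+1) y := by
    intro y h1 h2
    rcases gapB (x0+1) y h1 h2 with h | h
    · exact absurd ⟨y, ⟨h1, h2⟩, h⟩ hnUx1
    · exact h
  obtain ⟨ya, gya, hB1a⟩ := hUx0
  obtain ⟨yb, gyb, hB2b⟩ := hDx1
  rcases le_or_gt ya yb with h | h
  · exact cutG6 hw hl h12 h hB2b hB1a
  · -- yb < ya
    by_cases hg : ¬ Aset w P k (x0+1) ya ∧ ¬ A2set w P k (x0+1) ya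
    · exact cutG6 hw hl h12 le_rfl (gapB2x1 ya hg.1 hg.2) hB1a
    · have hQyb : ¬ ¬ (¬ Aset w P k (x0+1) yb ∧ ¬ A2set w P k (x0+1) yb) :=
        not_not_intro gyb
      obtain ⟨t, htb, hta, hgt, hngt1⟩ := exists_step
        (Q := fun y => ¬ (¬ Aset w P k (x0+1) y ∧ ¬ A2set w P k (x0+1) y))
        (le_of_lt h) hQyb hg
      have hgapt : ¬ Aset w P k (x0+1) t ∧ ¬ A2set w P k (x0+1) t := not_not.mp hgt
      by_cases hgx0t : ¬ Aset w P k x0 t ∧ ¬ A2set w P k x0 t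
      · exact cutG6 hw hl h12 le_rfl (gapB2x1 t hgapt.1 hgapt.2)
          (gapB1x0 t hgx0t.1 hgx0t.2)
      · have hA : Aset w P k (x0+1) (t+1) := by
          by_contra hnA
          exact hngt1 ⟨hnA, fun hA2 => hgapt.2 (hA2.mono le_rfl (by omega))⟩
        have hA2 : A2set w P k x0 t := by
          by_contra hnA2
          exact hgx0t ⟨fun hA' => gya.1 (hA'.mono le_rfl (by omega)), hnA2⟩
        exact cutG3 hw hk h21 hA hA2

end cut
end HVG


namespace HVG2
open HVG

/-! counting of cut lines -/

def cnt (xs : List ℕ) (v : ℕ) : ℕ := xs.countP (fun x => decide (x ≤ v))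

lemma cnt_cons (a : ℕ) (L : List ℕ) (v : ℕ) :
    cnt (a :: L) v = cnt L v + (if a ≤ v then 1 else 0) := by
  simp [cnt, List.countP_cons]

lemma cnt_append (L1 L2 : List ℕ) (v : ℕ) :
    cnt (L1 ++ L2) v = cnt L1 v + cnt L2 v := by
  simp [cnt, List.countP_append]

lemma cnt_mono (xs : List ℕ) {v v' : ℕ} (h : v ≤ v') : cnt xs v ≤ cnt xs v' := by
  induction xs with
  | nil => simp [cnt]
  | cons a L ih =>
    rw [cnt_cons, cnt_cons]
    have : (if a ≤ v then 1 else 0) ≤ (if a ≤ v' then 1 else 0) := by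
      by_cases hav : a ≤ v
      · rw [if_pos hav, if_pos (le_trans hav h)]
      · by_cases hav' : a ≤ v'
        · simp [hav, hav']
        · simp [hav, hav']
    omega

lemma cnt_le_length (xs : List ℕ) (v : ℕ) : cnt xs v ≤ xs.length :=
  List.countP_le_length

lemma cnt_replicate (n a v : ℕ) :
    cnt (List.replicate n a) v = if a ≤ v then n else 0 := by
  induction n with
  | zero => simp [cnt]
  | succ n ih =>
    rw [List.replicate_succ, cnt_cons, ih]
    by_cases h : a ≤ v <;> simp [h]

variable {N : ℕ}

/-- A monotone gridding datum: cut lists for positions and values plus a type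
function, making every cell monotone within the region `P`. -/
def MG (w : Fin N → Fin N) (P : Fin N → Prop) (xs ys : List ℕ) : Prop :=
  ∃ type : ℕ → ℕ → Bool, ∀ p q : Fin N, P p → P q → (p : ℕ) < (q : ℕ) →
    cnt xs (p : ℕ) = cnt xs (q : ℕ) → cnt ys (w p : ℕ) = cnt ys (w q : ℕ) →
    ((w p : ℕ) < (w q : ℕ) ↔ type (cnt xs (p : ℕ)) (cnt ys (w p : ℕ)) = true)

lemma MG_inc {w : Fin N → Fin N} (hw : Function.Injective w) {P : Fin N → Prop}
    (h : ¬ Ch21 w P 1) : MG w P [] [] := by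
  refine ⟨fun _ _ => true, ?_⟩
  intro p q hp hq hpq _ _
  simp only [iff_true]
  by_contra hlt
  apply h
  have hne : p ≠ q := fun h' => by rw [h'] at hpq; omega
  have : w p ≠ w q := fun h' => hne (hw h')
  have hv : (w p : ℕ) ≠ (w q : ℕ) := fun h' => this (Fin.val_injective h')
  refine ⟨fun _ => (p, q), fun s => ⟨hp, hq, hpq, show (w q : ℕ) < (w p : ℕ) by omega⟩,
    fun s t hst => ?_⟩
  rw [Fin.lt_def] at hst
  have := s.isLt
  have := t.isLt
  omega

lemma MG_dec {w : Fin N → Fin N} {P : Fin N → Prop}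
    (h : ¬ Ch12 w P 1) : MG w P [] [] := by
  refine ⟨fun _ _ => false, ?_⟩
  intro p q hp hq hpq _ _
  simp only [Bool.false_eq_true, iff_false]
  intro hlt
  apply h
  refine ⟨fun _ => (p, q), fun s => ⟨hp, hq, hpq, hlt⟩, fun s t hst => ?_⟩
  rw [Fin.lt_def] at hst
  have := s.isLt
  have := t.isLt
  omega

lemma cnt_components_aux {a b x : ℕ} (l1 l2 l3 l4 : List ℕ) (h : a ≤ b)
    (hex : cnt (x :: (l1++l2++l3++l4)) a = cnt (x :: (l1++l2++l3++l4)) b) :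
    cnt l1 a = cnt l1 b ∧ cnt l2 a = cnt l2 b ∧ cnt l3 a = cnt l3 b ∧
    cnt l4 a = cnt l4 b ∧ ((x ≤ a) ↔ (x ≤ b)) := by
  have e : ∀ v, cnt (x :: (l1++l2++l3++l4)) v =
      cnt l1 v + cnt l2 v + cnt l3 v + cnt l4 v + (if x ≤ v then 1 else 0) := by
    intro v
    rw [cnt_cons, cnt_append, cnt_append, cnt_append]
  rw [e, e] at hex
  have m1 := cnt_mono l1 h
  have m2 := cnt_mono l2 h
  have m3 := cnt_mono l3 h
  have m4 := cnt_mono l4 h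
  by_cases hxa : x ≤ a
  · have hxb : x ≤ b := le_trans hxa h
    rw [if_pos hxa, if_pos hxb] at hex
    exact ⟨by omega, by omega, by omega, by omega, iff_of_true hxa hxb⟩
  · by_cases hxb : x ≤ b
    · rw [if_neg hxa, if_pos hxb] at hex
      exact absurd hex (by omega)
    · rw [if_neg hxa, if_neg hxb] at hex
      exact ⟨by omega, by omega, by omega, by omega, iff_of_false hxa hxb⟩

lemma cnt_components {a b x : ℕ} (l1 l2 l3 l4 : List ℕ)
    (hex : cnt (x :: (l1++l2++l3++l4)) a = cnt (x :: (l1++l2++l3++l4)) b) :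
    cnt l1 a = cnt l1 b ∧ cnt l2 a = cnt l2 b ∧ cnt l3 a = cnt l3 b ∧
    cnt l4 a = cnt l4 b ∧ ((x ≤ a) ↔ (x ≤ b)) := by
  rcases le_total a b with h | h
  · exact cnt_components_aux l1 l2 l3 l4 h hex
  · obtain ⟨e1, e2, e3, e4, e5⟩ := cnt_components_aux l1 l2 l3 l4 h hex.symm
    exact ⟨e1.symm, e2.symm, e3.symm, e4.symm, e5.symm⟩



open scoped Classical in
lemma MG_glue {w : Fin N → Fin N} {P : Fin N → Prop} (x y : ℕ)
    {xs1 ys1 xs2 ys2 xs3 ys3 xs4 ys4 : List ℕ}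
    (h1 : MG w (fun i => P i ∧ (i : ℕ) < x ∧ (w i : ℕ) < y) xs1 ys1)
    (h2 : MG w (fun i => P i ∧ x ≤ (i : ℕ) ∧ y ≤ (w i : ℕ)) xs2 ys2)
    (h3 : MG w (fun i => P i ∧ x ≤ (i : ℕ) ∧ (w i : ℕ) < y) xs3 ys3)
    (h4 : MG w (fun i => P i ∧ (i : ℕ) < x ∧ y ≤ (w i : ℕ)) xs4 ys4) :
    MG w P (x :: (xs1 ++ xs2 ++ xs3 ++ xs4)) (y :: (ys1 ++ ys2 ++ ys3 ++ ys4)) := by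
  obtain ⟨t1, H1⟩ := h1
  obtain ⟨t2, H2⟩ := h2
  obtain ⟨t3, H3⟩ := h3
  obtain ⟨t4, H4⟩ := h4
  set XS := x :: (xs1 ++ xs2 ++ xs3 ++ xs4) with hXS
  set YS := y :: (ys1 ++ ys2 ++ ys3 ++ ys4) with hYS
  refine ⟨fun cx cy => if (∃ p q : Fin N, P p ∧ P q ∧ (p : ℕ) < (q : ℕ) ∧
      cnt XS (p : ℕ) = cx ∧ cnt XS (q : ℕ) = cx ∧
      cnt YS (w p : ℕ) = cy ∧ cnt YS (w q : ℕ) = cy ∧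
      (w p : ℕ) < (w q : ℕ)) then true else false, ?_⟩
  intro p q hp hq hpq hcx hcy
  constructor
  · intro hlt
    beta_reduce
    rw [if_pos ⟨p, q, hp, hq, hpq, rfl, hcx.symm, rfl, hcy.symm, hlt⟩]
  · intro htype
    beta_reduce at htype
    by_cases hex : (∃ p' q' : Fin N, P p' ∧ P q' ∧ (p' : ℕ) < (q' : ℕ) ∧
        cnt XS (p' : ℕ) = cnt XS (p : ℕ) ∧ cnt XS (q' : ℕ) = cnt XS (p : ℕ) ∧
        cnt YS (w p' : ℕ) = cnt YS (w p : ℕ) ∧ cnt YS (w q' : ℕ) = cnt YS (w p : ℕ) ∧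
        (w p' : ℕ) < (w q' : ℕ))
    swap
    · rw [if_neg hex] at htype
      exact absurd htype (by simp)
    obtain ⟨p', q', hp', hq', hpq', e1, e2, e3, e4, hlt'⟩ := hex
    have cpq := cnt_components xs1 xs2 xs3 xs4 (hXS ▸ hcx)
    have vpq := cnt_components ys1 ys2 ys3 ys4 (hYS ▸ hcy)
    have cpp' := cnt_components xs1 xs2 xs3 xs4 (hXS ▸ e1)
    have cpq' := cnt_components xs1 xs2 xs3 xs4 (hXS ▸ e2)
    have vpp' := cnt_components ys1 ys2 ys3 ys4 (hYS ▸ e3)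
    have vpq' := cnt_components ys1 ys2 ys3 ys4 (hYS ▸ e4)
    by_cases hxp : x ≤ (p : ℕ)
    · by_cases hyp : y ≤ (w p : ℕ)
      · -- NE quadrant, lists xs2/ys2, projection .2.1
        have hxq : x ≤ (q : ℕ) := cpq.2.2.2.2.mp hxp
        have hyq : y ≤ (w q : ℕ) := vpq.2.2.2.2.mp hyp
        have hxp' : x ≤ (p' : ℕ) := cpp'.2.2.2.2.mpr hxp
        have hxq' : x ≤ (q' : ℕ) := cpq'.2.2.2.2.mpr hxp
        have hyp' : y ≤ (w p' : ℕ) := vpp'.2.2.2.2.mpr hyp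
        have hyq' : y ≤ (w q' : ℕ) := vpq'.2.2.2.2.mpr hyp
        have I' := H2 p' q' ⟨hp', hxp', hyp'⟩ ⟨hq', hxq', hyq'⟩ hpq'
          (by rw [cpp'.2.1, cpq'.2.1]) (by rw [vpp'.2.1, vpq'.2.1])
        have I := H2 p q ⟨hp, hxp, hyp⟩ ⟨hq, hxq, hyq⟩ hpq cpq.2.1 vpq.2.1
        rw [I]
        rw [I', cpp'.2.1, vpp'.2.1] at hlt'
        exact hlt'
      · -- SE quadrant, lists xs3/ys3, projection .2.2.1
        have hxq : x ≤ (q : ℕ) := cpq.2.2.2.2.mp hxp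
        have hyq : (w q : ℕ) < y := by have := vpq.2.2.2.2; omega
        have hxp' : x ≤ (p' : ℕ) := cpp'.2.2.2.2.mpr hxp
        have hxq' : x ≤ (q' : ℕ) := cpq'.2.2.2.2.mpr hxp
        have hyp' : (w p' : ℕ) < y := by have := vpp'.2.2.2.2; omega
        have hyq' : (w q' : ℕ) < y := by have := vpq'.2.2.2.2; omega
        have I' := H3 p' q' ⟨hp', hxp', hyp'⟩ ⟨hq', hxq', hyq'⟩ hpq'
          (by rw [cpp'.2.2.1, cpq'.2.2.1]) (by rw [vpp'.2.2.1, vpq'.2.2.1])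
        have I := H3 p q ⟨hp, hxp, by omega⟩ ⟨hq, hxq, hyq⟩ hpq cpq.2.2.1 vpq.2.2.1
        rw [I]
        rw [I', cpp'.2.2.1, vpp'.2.2.1] at hlt'
        exact hlt'
    · by_cases hyp : y ≤ (w p : ℕ)
      · -- NW quadrant, lists xs4/ys4, projection .2.2.2.1
        have hxq : (q : ℕ) < x := by have := cpq.2.2.2.2; omega
        have hyq : y ≤ (w q : ℕ) := vpq.2.2.2.2.mp hyp
        have hxp' : (p' : ℕ) < x := by have := cpp'.2.2.2.2; omega
        have hxq' : (q' : ℕ) < x := by have := cpq'.2.2.2.2; omega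
        have hyp' : y ≤ (w p' : ℕ) := vpp'.2.2.2.2.mpr hyp
        have hyq' : y ≤ (w q' : ℕ) := vpq'.2.2.2.2.mpr hyp
        have I' := H4 p' q' ⟨hp', hxp', hyp'⟩ ⟨hq', hxq', hyq'⟩ hpq'
          (by rw [cpp'.2.2.2.1, cpq'.2.2.2.1]) (by rw [vpp'.2.2.2.1, vpq'.2.2.2.1])
        have I := H4 p q ⟨hp, by omega, hyp⟩ ⟨hq, hxq, hyq⟩ hpq cpq.2.2.2.1 vpq.2.2.2.1
        rw [I]
        rw [I', cpp'.2.2.2.1, vpp'.2.2.2.1] at hlt'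
        exact hlt'
      · -- SW quadrant, lists xs1/ys1, projection .1
        have hxq : (q : ℕ) < x := by have := cpq.2.2.2.2; omega
        have hyq : (w q : ℕ) < y := by have := vpq.2.2.2.2; omega
        have hxp' : (p' : ℕ) < x := by have := cpp'.2.2.2.2; omega
        have hxq' : (q' : ℕ) < x := by have := cpq'.2.2.2.2; omega
        have hyp' : (w p' : ℕ) < y := by have := vpp'.2.2.2.2; omega
        have hyq' : (w q' : ℕ) < y := by have := vpq'.2.2.2.2; omega
        have I' := H1 p' q' ⟨hp', hxp', hyp'⟩ ⟨hq', hxq', hyq'⟩ hpq'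
          (by rw [cpp'.1, cpq'.1]) (by rw [vpp'.1, vpq'.1])
        have I := H1 p q ⟨hp, by omega, by omega⟩ ⟨hq, hxq, hyq⟩ hpq cpq.1 vpq.1
        rw [I]
        rw [I', cpp'.1, vpp'.1] at hlt'
        exact hlt'


lemma thmA : ∀ (s : ℕ) {N : ℕ} (w : Fin N → Fin N), Function.Injective w →
    ∀ (P : Fin N → Prop) (k l : ℕ), 1 ≤ k → 1 ≤ l → k + l ≤ s →
    ¬ Ch21 w P k → ¬ Ch12 w P l →
    ∃ xs ys : List ℕ, xs.length ≤ 5 ^ s ∧ ys.length ≤ 5 ^ s ∧ MG w P xs ys := by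
  intro s
  induction s with
  | zero =>
    intro N w hw P k l hk hl hs _ _
    omega
  | succ s ih =>
    intro N w hw P k l hk hl hs h21 h12
    have h5 : 1 ≤ 5 ^ s := Nat.one_le_pow s 5 (by norm_num)
    have h5' : 5 ^ (s+1) = 5 * 5 ^ s := by
      rw [pow_succ]
      ring
    by_cases hk1 : k = 1
    · exact ⟨[], [], Nat.zero_le _, Nat.zero_le _, MG_inc hw (hk1 ▸ h21)⟩
    by_cases hl1 : l = 1
    · exact ⟨[], [], Nat.zero_le _, Nat.zero_le _, MG_dec (hl1 ▸ h12)⟩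
    obtain ⟨x, y, c1, c2, c3, c4⟩ :=
      cut_exists hw (show 2 ≤ k by omega) (show 2 ≤ l by omega) h21 h12
    obtain ⟨xs1, ys1, hL1, hM1, m1⟩ := ih w hw _ (k-1) l (by omega) hl (by omega) c1
      (fun hc => h12 (hc.mono (fun i hi => hi.1)))
    obtain ⟨xs2, ys2, hL2, hM2, m2⟩ := ih w hw _ (k-1) l (by omega) hl (by omega) c2
      (fun hc => h12 (hc.mono (fun i hi => hi.1)))
    obtain ⟨xs3, ys3, hL3, hM3, m3⟩ := ih w hw _ k (l-1) hk (by omega) (by omega)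
      (fun hc => h21 (hc.mono (fun i hi => hi.1))) c3
    obtain ⟨xs4, ys4, hL4, hM4, m4⟩ := ih w hw _ k (l-1) hk (by omega) (by omega)
      (fun hc => h21 (hc.mono (fun i hi => hi.1))) c4
    refine ⟨x :: (xs1 ++ xs2 ++ xs3 ++ xs4), y :: (ys1 ++ ys2 ++ ys3 ++ ys4), ?_, ?_,
      MG_glue x y m1 m2 m3 m4⟩
    · simp only [List.length_cons, List.length_append]
      omega
    · simp only [List.length_cons, List.length_append]
      omega

end HVG2


namespace HVG3
open HVG HVG2

lemma MG_pad {N : ℕ} {w : Fin N → Fin N} {P : Fin N → Prop} {xs ys : List ℕ}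
    (h : MG w P xs ys) (L : ℕ) (hx : xs.length ≤ L) (hy : ys.length ≤ L) :
    ∃ xs' ys' : List ℕ, xs'.length = L ∧ ys'.length = L ∧ MG w P xs' ys' := by
  obtain ⟨type, H⟩ := h
  have ex : ∀ (v : ℕ), v < N → cnt (xs ++ List.replicate (L - xs.length) N) v = cnt xs v := by
    intro v hv
    rw [cnt_append, cnt_replicate, if_neg (by omega)]
    omega
  have ey : ∀ (v : ℕ), v < N → cnt (ys ++ List.replicate (L - ys.length) N) v = cnt ys v := by
    intro v hv
    rw [cnt_append, cnt_replicate, if_neg (by omega)]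
    omega
  refine ⟨xs ++ List.replicate (L - xs.length) N, ys ++ List.replicate (L - ys.length) N,
    by simp; omega, by simp; omega, type, ?_⟩
  intro p q hp hq hpq hcx hcy
  rw [ex _ p.isLt, ex _ q.isLt] at hcx
  rw [ey _ (w p).isLt, ey _ (w q).isLt] at hcy
  rw [ex _ p.isLt, ey _ (w p).isLt]
  exact H p q hp hq hpq hcx hcy

abbrev TS (L : ℕ) : Type := Fin (L+1) → Fin (L+1) → Bool

noncomputable def tEquiv (L : ℕ) : TS L ≃ Fin (Fintype.card (TS L)) := Fintype.equivFin _

abbrev MD (L : ℕ) : ℕ := Fintype.card (TS L) * (L+1)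

def decB (L : ℕ) (i : Fin (MD L)) : Fin (Fintype.card (TS L)) :=
  ⟨(i : ℕ) / (L+1), by
    have hi := i.isLt
    exact (Nat.div_lt_iff_lt_mul (Nat.succ_pos L)).mpr hi⟩

def decS (L : ℕ) (i : Fin (MD L)) : Fin (L+1) :=
  ⟨(i : ℕ) % (L+1), Nat.mod_lt _ (Nat.succ_pos L)⟩

noncomputable def Mstar (L : ℕ) : Fin (MD L) → Fin (MD L) → Set Perm' := fun i j =>
  if decB L i = decB L j then
    (if (tEquiv L).symm (decB L i) (decS L i) (decS L j) = true then Av21 else Av12)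
  else ∅

lemma Mstar_mono (L : ℕ) (i j : Fin (MD L)) :
    IsMonotoneClass (Mstar L i j) ∨ Mstar L i j = ∅ := by
  unfold Mstar
  split_ifs with h1 h2
  · exact Or.inl (Or.inl rfl)
  · exact Or.inl (Or.inr rfl)
  · exact Or.inr rfl

def encB (L : ℕ) (b : Fin (Fintype.card (TS L))) (c : Fin (L+1)) : Fin (MD L) :=
  ⟨(b : ℕ) * (L+1) + (c : ℕ), by
    have hb := b.isLt
    have hc := c.isLt
    calc (b : ℕ) * (L+1) + (c : ℕ) < ((b : ℕ) + 1) * (L+1) := by ring_nf; omega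
    _ ≤ Fintype.card (TS L) * (L+1) := Nat.mul_le_mul_right _ (by omega)⟩

lemma encB_val (L : ℕ) (b : Fin (Fintype.card (TS L))) (c : Fin (L+1)) :
    ((encB L b c : Fin (MD L)) : ℕ) = (b : ℕ) * (L+1) + (c : ℕ) := rfl

lemma decB_encB (L : ℕ) (b : Fin (Fintype.card (TS L))) (c : Fin (L+1)) :
    decB L (encB L b c) = b := by
  apply Fin.ext
  show ((b : ℕ) * (L+1) + (c : ℕ)) / (L+1) = b
  rw [Nat.add_comm, Nat.add_mul_div_right _ _ (Nat.succ_pos L), Nat.div_eq_of_lt c.isLt]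
  omega

lemma decS_encB (L : ℕ) (b : Fin (Fintype.card (TS L))) (c : Fin (L+1)) :
    decS L (encB L b c) = c := by
  apply Fin.ext
  show ((b : ℕ) * (L+1) + (c : ℕ)) % (L+1) = c
  rw [Nat.add_comm, Nat.add_mul_mod_self_right, Nat.mod_eq_of_lt c.isLt]

lemma griddable_of_MG (L : ℕ) (π : Perm')
    (h : ∃ xs ys : List ℕ, xs.length = L ∧ ys.length = L ∧
      MG (⇑π.2) (fun _ => True) xs ys) :
    Griddable (Mstar L) π := by
  obtain ⟨xs, ys, hxl, hyl, type, H⟩ := h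
  have hw : Function.Injective (⇑π.2) := π.2.injective
  set T : TS L := fun s t => type (s : ℕ) (t : ℕ) with hT
  set b : Fin (Fintype.card (TS L)) := tEquiv L T with hb
  have hcx : ∀ i : Fin π.1, cnt xs (i : ℕ) < L + 1 :=
    fun i => lt_of_le_of_lt (cnt_le_length xs _) (by omega)
  have hcy : ∀ i : Fin π.1, cnt ys ((π.2 i : ℕ)) < L + 1 :=
    fun i => lt_of_le_of_lt (cnt_le_length ys _) (by omega)
  set κ : Fin π.1 → Fin (MD L) × Fin (MD L) :=
    fun i => (encB L b ⟨cnt xs (i : ℕ), hcx i⟩, encB L b ⟨cnt ys ((π.2 i : ℕ)), hcy i⟩)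
    with hκ
  refine ⟨κ, ⟨?_, ?_⟩, ?_⟩
  · intro i i' hii
    have : (i : ℕ) ≤ (i' : ℕ) := hii
    have hm := cnt_mono xs this
    show encB L b ⟨cnt xs (i : ℕ), hcx i⟩ ≤ encB L b ⟨cnt xs (i' : ℕ), hcx i'⟩
    rw [Fin.le_def, encB_val, encB_val]
    simp only [Fin.val_mk]
    omega
  · intro i i' hii
    have : ((π.2 i : Fin π.1) : ℕ) ≤ ((π.2 i' : Fin π.1) : ℕ) := hii
    have hm := cnt_mono ys this
    show encB L b ⟨cnt ys ((π.2 i : ℕ)), hcy i⟩ ≤ encB L b ⟨cnt ys ((π.2 i' : ℕ)), hcy i'⟩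
    rw [Fin.le_def, encB_val, encB_val]
    simp only [Fin.val_mk]
    omega
  · intro s t
    by_cases hcell : ∃ i, κ i = (s, t)
    swap
    · exact Or.inl (fun i hi => hcell ⟨i, hi⟩)
    obtain ⟨i0, hi0⟩ := hcell
    right
    have hs : s = encB L b ⟨cnt xs (i0 : ℕ), hcx i0⟩ := by
      have := congrArg Prod.fst hi0
      exact this.symm
    have ht : t = encB L b ⟨cnt ys ((π.2 i0 : ℕ)), hcy i0⟩ := by
      have := congrArg Prod.snd hi0
      exact this.symm
    have hdBs : decB L s = b := by rw [hs, decB_encB]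
    have hdBt : decB L t = b := by rw [ht, decB_encB]
    have hdSs : (decS L s : ℕ) = cnt xs (i0 : ℕ) := by rw [hs, decS_encB]
    have hdSt : (decS L t : ℕ) = cnt ys ((π.2 i0 : ℕ)) := by rw [ht, decS_encB]
    have hmem : ∀ j : Fin π.1, κ j = (s, t) →
        cnt xs (j : ℕ) = cnt xs (i0 : ℕ) ∧
        cnt ys ((π.2 j : ℕ)) = cnt ys ((π.2 i0 : ℕ)) := by
      intro j hj
      have h1 : (κ j).1 = (κ i0).1 := by rw [hj, hi0]
      have h2 : (κ j).2 = (κ i0).2 := by rw [hj, hi0]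
      have v1 := congrArg (fun z : Fin (MD L) => (z : ℕ)) h1
      have v2 := congrArg (fun z : Fin (MD L) => (z : ℕ)) h2
      simp only [hκ, encB_val, Fin.val_mk] at v1 v2
      constructor
      · omega
      · omega
    have hbool : (tEquiv L).symm (decB L s) (decS L s) (decS L t) =
        type (cnt xs (i0 : ℕ)) (cnt ys ((π.2 i0 : ℕ))) := by
      rw [hdBs, hb, Equiv.symm_apply_apply, hT]
      simp only []
      rw [hdSs, hdSt]
    have hMs : Mstar L s t = (if type (cnt xs (i0 : ℕ)) (cnt ys ((π.2 i0 : ℕ))) = true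
        then Av21 else Av12) := by
      unfold Mstar
      rw [if_pos (by rw [hdBs, hdBt]), hbool]
    set F : Finset (Fin π.1) := Finset.univ.filter (fun i => κ i = (s, t)) with hF
    have hmemF : ∀ j, j ∈ F ↔ κ j = (s, t) := by
      intro j
      simp [hF]
    set o := F.orderIsoOfFin (rfl : F.card = F.card) with ho
    set g : Fin F.card → Fin π.1 := fun a => (o a : Fin π.1) with hg
    have hgmono : StrictMono g := by
      intro a b' hab
      exact Subtype.coe_lt_coe.mpr (o.strictMono hab)
    have hgmem : ∀ a, κ (g a) = (s, t) := fun a => (hmemF _).mp (o a).prop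
    have hcnt : ∀ a b' : Fin F.card,
        cnt xs ((g a : ℕ)) = cnt xs ((g b' : ℕ)) ∧
        cnt ys ((π.2 (g a) : ℕ)) = cnt ys ((π.2 (g b') : ℕ)) := by
      intro a b'
      obtain ⟨u1, u2⟩ := hmem _ (hgmem a)
      obtain ⟨v1', v2'⟩ := hmem _ (hgmem b')
      exact ⟨by omega, by omega⟩
    by_cases htype : type (cnt xs (i0 : ℕ)) (cnt ys ((π.2 i0 : ℕ))) = true
    · have key : ∀ a b' : Fin F.card, a < b' → π.2 (g a) < π.2 (g b') := by
        intro a b' hab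
        have hlt : ((g a : ℕ)) < ((g b' : ℕ)) := hgmono hab
        have hiff := H (g a) (g b') trivial trivial hlt (hcnt a b').1 (hcnt a b').2
        rw [(hmem _ (hgmem a)).1, (hmem _ (hgmem a)).2] at hiff
        rw [Fin.lt_def]
        exact hiff.mpr htype
      refine ⟨⟨F.card, Equiv.refl _⟩, ?_, g, hgmono, ?_, ?_, ?_⟩
      · rw [hMs, if_pos htype]
        intro a b' hab
        exact hab
      · intro a
        exact hgmem a
      · intro i hi
        have hiF : i ∈ F := (hmemF i).mpr hi
        exact ⟨o.symm ⟨i, hiF⟩, congrArg Subtype.val (o.apply_symm_apply ⟨i, hiF⟩)⟩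
      · intro a b'
        show (Equiv.refl (Fin F.card)) a < (Equiv.refl (Fin F.card)) b' ↔ _
        simp only [Equiv.refl_apply]
        rcases lt_trichotomy a b' with hab | hab | hab
        · exact iff_of_true hab (key a b' hab)
        · subst hab
          exact iff_of_false (lt_irrefl _) (lt_irrefl _)
        · exact iff_of_false (not_lt_of_gt hab) (not_lt_of_gt (key b' a hab))
    · have key : ∀ a b' : Fin F.card, a < b' → π.2 (g b') < π.2 (g a) := by
        intro a b' hab
        have hlt : ((g a : ℕ)) < ((g b' : ℕ)) := hgmono hab
        have hiff := H (g a) (g b') trivial trivial hlt (hcnt a b').1 (hcnt a b').2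
        rw [(hmem _ (hgmem a)).1, (hmem _ (hgmem a)).2] at hiff
        have hne : g a ≠ g b' := fun h => by rw [h] at hlt; omega
        have hne2 : π.2 (g a) ≠ π.2 (g b') := fun h => hne (π.2.injective h)
        have hvne : ((π.2 (g a) : ℕ)) ≠ ((π.2 (g b') : ℕ)) :=
          fun h => hne2 (Fin.val_injective h)
        have hnlt : ¬ ((π.2 (g a) : ℕ) < (π.2 (g b') : ℕ)) := fun h => htype (hiff.mp h)
        rw [Fin.lt_def]
        omega
      refine ⟨⟨F.card, Fin.revPerm⟩, ?_, g, hgmono, ?_, ?_, ?_⟩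
      · rw [hMs, if_neg htype]
        intro a b' hab
        show Fin.rev b' ≤ Fin.rev a
        exact Fin.rev_le_rev.mpr hab
      · intro a
        exact hgmem a
      · intro i hi
        have hiF : i ∈ F := (hmemF i).mpr hi
        exact ⟨o.symm ⟨i, hiF⟩, congrArg Subtype.val (o.apply_symm_apply ⟨i, hiF⟩)⟩
      · intro a b'
        show Fin.rev a < Fin.rev b' ↔ _
        rw [Fin.rev_lt_rev]
        rcases lt_trichotomy a b' with hab | hab | hab
        · exact iff_of_false (not_lt_of_gt hab) (not_lt_of_gt (key a b' hab))
        · subst hab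
          exact iff_of_false (lt_irrefl _) (lt_irrefl _)
        · exact iff_of_true hab (key b' a hab)

lemma MonotoneGriddable_of_forb (C : Set Perm') (k l : ℕ) (hk : 1 ≤ k) (hl : 1 ≤ l)
    (hall : ∀ π ∈ C, ¬ Ch21 (⇑π.2) (fun _ => True) k ∧ ¬ Ch12 (⇑π.2) (fun _ => True) l) :
    MonotoneGriddable C := by
  refine ⟨MD (5 ^ (k + l)), MD (5 ^ (k + l)), Mstar (5 ^ (k + l)),
    fun i j => Mstar_mono _ i j, ?_⟩
  intro π hπ
  obtain ⟨h21, h12⟩ := hall π hπ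
  obtain ⟨xs, ys, hx, hy, m⟩ := thmA (k + l) (⇑π.2) π.2.injective (fun _ => True) k l
    hk hl le_rfl h21 h12
  exact griddable_of_MG _ π (MG_pad m _ hx hy)

end HVG3


namespace HVG4
open HVG HVG2

lemma dsum_val_left (σ τ : Perm') (j : Fin σ.1) :
    (((σ.dsum τ).2 (Fin.castAdd τ.1 j)) : ℕ) = (σ.2 j : ℕ) := by
  show ((finSumFinEquiv.symm.trans ((Equiv.sumCongr σ.2 τ.2).trans finSumFinEquiv))
      (Fin.castAdd τ.1 j) : ℕ) = _
  rw [Equiv.trans_apply, finSumFinEquiv_symm_apply_castAdd, Equiv.trans_apply]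
  simp

lemma dsum_val_right (σ τ : Perm') (j : Fin τ.1) :
    (((σ.dsum τ).2 (Fin.natAdd σ.1 j)) : ℕ) = σ.1 + (τ.2 j : ℕ) := by
  show ((finSumFinEquiv.symm.trans ((Equiv.sumCongr σ.2 τ.2).trans finSumFinEquiv))
      (Fin.natAdd σ.1 j) : ℕ) = _
  rw [Equiv.trans_apply, finSumFinEquiv_symm_apply_natAdd, Equiv.trans_apply]
  simp

lemma skew_val_left (σ τ : Perm') (j : Fin σ.1) :
    (((σ.skewSum τ).2 (Fin.castAdd τ.1 j)) : ℕ) = τ.1 + (σ.2 j : ℕ) := by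
  show ((finSumFinEquiv.symm.trans ((Equiv.sumCongr σ.2 τ.2).trans
      ((Equiv.sumComm (Fin σ.1) (Fin τ.1)).trans
      (finSumFinEquiv.trans (finCongr (Nat.add_comm τ.1 σ.1))))))
      (Fin.castAdd τ.1 j) : ℕ) = _
  rw [Equiv.trans_apply, finSumFinEquiv_symm_apply_castAdd]
  simp
  omega

lemma skew_val_right (σ τ : Perm') (j : Fin τ.1) :
    (((σ.skewSum τ).2 (Fin.natAdd σ.1 j)) : ℕ) = (τ.2 j : ℕ) := by
  show ((finSumFinEquiv.symm.trans ((Equiv.sumCongr σ.2 τ.2).trans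
      ((Equiv.sumComm (Fin σ.1) (Fin τ.1)).trans
      (finSumFinEquiv.trans (finCongr (Nat.add_comm τ.1 σ.1))))))
      (Fin.natAdd σ.1 j) : ℕ) = _
  rw [Equiv.trans_apply, finSumFinEquiv_symm_apply_natAdd]
  simp


lemma foldr_emb21 (π : Perm') : ∀ (L : List Perm')
    (c : Fin L.length → Fin π.1 × Fin π.1),
    (∀ α ∈ L, α.Le perm21) →
    (∀ s, ((c s).1 : ℕ) < ((c s).2 : ℕ) ∧ ((π.2 (c s).2 : ℕ)) < ((π.2 (c s).1 : ℕ))) →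
    (∀ s t, s < t → ((c s).2 : ℕ) < ((c t).1 : ℕ) ∧
      ((π.2 (c s).1 : ℕ)) < ((π.2 (c t).2 : ℕ))) →
    ∃ f : Fin (L.foldr Perm'.dsum emptyPerm).1 → Fin π.1,
      (∀ a b : Fin (L.foldr Perm'.dsum emptyPerm).1,
        (a : ℕ) < (b : ℕ) → (f a : ℕ) < (f b : ℕ)) ∧
      (∀ a b, (((L.foldr Perm'.dsum emptyPerm).2 a : ℕ) <
          ((L.foldr Perm'.dsum emptyPerm).2 b : ℕ))
        ↔ ((π.2 (f a) : ℕ) < (π.2 (f b) : ℕ))) ∧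
      (∀ a, ∃ s, f a = (c s).1 ∨ f a = (c s).2) := by
  intro L
  induction L with
  | nil =>
    intro c _ _ _
    exact ⟨fun a => a.elim0, fun a => a.elim0, fun a => a.elim0, fun a => a.elim0⟩
  | cons α L' ih =>
    intro c hLe hc1 hc2
    set ρ' := L'.foldr Perm'.dsum emptyPerm with hρ'
    set z0 : Fin ((α :: L').length) := ⟨0, by simp⟩ with hz0
    have hidx : ∀ s' : Fin L'.length, ((s' : ℕ) + 1) < (α :: L').length := by
      intro s'
      have := s'.isLt
      simp only [List.length_cons]
      omega
    obtain ⟨f', hf'mono, hf'iso, hf'loc⟩ := ih (fun s' => c ⟨(s' : ℕ) + 1, hidx s'⟩)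
      (fun α' h => hLe α' (List.mem_cons_of_mem _ h))
      (fun s' => hc1 _)
      (fun s' t' hst => hc2 ⟨(s' : ℕ) + 1, hidx s'⟩ ⟨(t' : ℕ) + 1, hidx t'⟩
        (Fin.mk_lt_mk.mpr (Nat.succ_lt_succ hst)))
    obtain ⟨f2, hf2mono, hf2iso⟩ := hLe α List.mem_cons_self
    set g0 : Fin 2 → Fin π.1 := fun u => if (u : ℕ) = 0 then (c z0).1 else (c z0).2 with hg0
    have vz := hc1 z0
    have hg0a : ∀ u : Fin 2, ((g0 u : ℕ) ≤ ((c z0).2 : ℕ)) ∧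
        ((π.2 (g0 u) : ℕ) ≤ (π.2 (c z0).1 : ℕ)) := by
      intro u
      simp only [hg0]
      by_cases h : (u : ℕ) = 0
      · rw [if_pos h]
        exact ⟨le_of_lt vz.1, le_refl _⟩
      · rw [if_neg h]
        exact ⟨le_refl _, le_of_lt vz.2⟩
    have hloc' : ∀ b' : Fin ρ'.1, ((c z0).2 : ℕ) < (f' b' : ℕ) ∧
        ((π.2 (c z0).1 : ℕ)) < ((π.2 (f' b') : ℕ)) := by
      intro b'
      obtain ⟨s', hs'⟩ := hf'loc b'
      have h1 := hc2 z0 ⟨(s' : ℕ) + 1, hidx s'⟩ (Fin.mk_lt_mk.mpr (by omega))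
      have h2 := hc1 ⟨(s' : ℕ) + 1, hidx s'⟩
      rcases hs' with h | h <;> rw [h]
      · exact ⟨h1.1, by omega⟩
      · exact ⟨by omega, h1.2⟩
    have hfin : ∀ i : Fin ((α :: L').foldr Perm'.dsum emptyPerm).1,
        (i : ℕ) < α.1 + ρ'.1 := fun i => i.isLt
    set f : Fin ((α :: L').foldr Perm'.dsum emptyPerm).1 → Fin π.1 := fun i =>
      if h : (i : ℕ) < α.1 then g0 (f2 ⟨(i : ℕ), h⟩)
      else f' ⟨(i : ℕ) - α.1, by have := hfin i; omega⟩ with hf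
    have ea : ∀ (i : Fin ((α :: L').foldr Perm'.dsum emptyPerm).1) (h : (i : ℕ) < α.1),
        (((α :: L').foldr Perm'.dsum emptyPerm).2 i : ℕ) = (α.2 ⟨(i : ℕ), h⟩ : ℕ) := by
      intro i h
      have hi : i = Fin.castAdd ρ'.1 ⟨(i : ℕ), h⟩ := Fin.ext rfl
      conv_lhs => rw [hi]
      exact dsum_val_left α ρ' ⟨(i : ℕ), h⟩
    have eb : ∀ (i : Fin ((α :: L').foldr Perm'.dsum emptyPerm).1) (h : α.1 ≤ (i : ℕ))
        (hb : (i : ℕ) - α.1 < ρ'.1),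
        (((α :: L').foldr Perm'.dsum emptyPerm).2 i : ℕ) =
          α.1 + (ρ'.2 ⟨(i : ℕ) - α.1, hb⟩ : ℕ) := by
      intro i h hb
      have hi : i = Fin.natAdd α.1 ⟨(i : ℕ) - α.1, hb⟩ := Fin.ext (by
        show (i : ℕ) = α.1 + ((i : ℕ) - α.1)
        omega)
      conv_lhs => rw [hi]
      exact dsum_val_right α ρ' _
    have g0iso : ∀ u v : Fin 2, ((perm21.2 u : ℕ) < (perm21.2 v : ℕ)) ↔
        ((π.2 (g0 u) : ℕ) < (π.2 (g0 v) : ℕ)) := by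
      intro u v
      have hu := u.isLt
      have hv := v.isLt
      have pval : ∀ z : Fin 2, ((perm21.2 z : ℕ)) = 1 - (z : ℕ) := by decide
      rw [pval, pval]
      simp only [hg0]
      have hv1 := vz.1
      have hv2 := vz.2
      by_cases h0 : (u : ℕ) = 0 <;> by_cases h1 : (v : ℕ) = 0
      · rw [if_pos h0, if_pos h1]
        omega
      · rw [if_pos h0, if_neg h1]
        omega
      · rw [if_neg h0, if_pos h1]
        omega
      · rw [if_neg h0, if_neg h1]
        omega
    refine ⟨f, ?_, ?_, ?_⟩
    · intro a b hab
      simp only [hf]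
      by_cases ha : (a : ℕ) < α.1 <;> by_cases hb : (b : ℕ) < α.1
      · rw [dif_pos ha, dif_pos hb]
        have h2 : (f2 ⟨(a : ℕ), ha⟩ : ℕ) < (f2 ⟨(b : ℕ), hb⟩ : ℕ) :=
          hf2mono (Fin.mk_lt_mk.mpr hab)
        have hu : ((f2 ⟨(a : ℕ), ha⟩ : Fin perm21.1) : ℕ) < 2 := (f2 ⟨(a : ℕ), ha⟩).isLt
        have hv : ((f2 ⟨(b : ℕ), hb⟩ : Fin perm21.1) : ℕ) < 2 := (f2 ⟨(b : ℕ), hb⟩).isLt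
        have hu0 : ((f2 ⟨(a : ℕ), ha⟩ : Fin 2) : ℕ) = 0 := by omega
        have hv1 : ¬ ((f2 ⟨(b : ℕ), hb⟩ : Fin 2) : ℕ) = 0 := by omega
        simp only [hg0]
        rw [if_pos hu0, if_neg hv1]
        exact vz.1
      · rw [dif_pos ha, dif_neg hb]
        have h1 := (hg0a (f2 ⟨(a : ℕ), ha⟩)).1
        have h2 := (hloc' ⟨(b : ℕ) - α.1, by have := hfin b; omega⟩).1
        omega
      · omega
      · rw [dif_neg ha, dif_neg hb]
        exact hf'mono _ _ (by simp only [Fin.val_mk]; omega)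
    · intro a b
      by_cases ha : (a : ℕ) < α.1 <;> by_cases hb : (b : ℕ) < α.1
      · rw [ea a ha, ea b hb]
        simp only [hf]
        rw [dif_pos ha, dif_pos hb]
        exact (hf2iso ⟨(a : ℕ), ha⟩ ⟨(b : ℕ), hb⟩).trans (g0iso _ _)
      · rw [ea a ha, eb b (by omega) (by have := hfin b; omega)]
        simp only [hf]
        rw [dif_pos ha, dif_neg hb]
        apply iff_of_true
        · have := (α.2 ⟨(a : ℕ), ha⟩).isLt
          omega
        · have h1 := (hg0a (f2 ⟨(a : ℕ), ha⟩)).2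
          have h2 := (hloc' ⟨(b : ℕ) - α.1, by have := hfin b; omega⟩).2
          omega
      · rw [eb a (by omega) (by have := hfin a; omega), ea b hb]
        simp only [hf]
        rw [dif_neg ha, dif_pos hb]
        apply iff_of_false
        · have := (α.2 ⟨(b : ℕ), hb⟩).isLt
          omega
        · have h1 := (hg0a (f2 ⟨(b : ℕ), hb⟩)).2
          have h2 := (hloc' ⟨(a : ℕ) - α.1, by have := hfin a; omega⟩).2
          omega
      · rw [eb a (by omega) (by have := hfin a; omega), eb b (by omega) (by have := hfin b; omega)]
        simp only [hf]
        rw [dif_neg ha, dif_neg hb]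
        have hI := hf'iso ⟨(a : ℕ) - α.1, by have := hfin a; omega⟩
          ⟨(b : ℕ) - α.1, by have := hfin b; omega⟩
        constructor
        · intro hh
          exact hI.mp (by omega)
        · intro hh
          have := hI.mpr hh
          omega
    · intro a
      simp only [hf]
      by_cases ha : (a : ℕ) < α.1
      · rw [dif_pos ha]
        refine ⟨z0, ?_⟩
        simp only [hg0]
        by_cases h0 : ((f2 ⟨(a : ℕ), ha⟩ : Fin 2) : ℕ) = 0
        · left
          rw [if_pos h0]
        · right
          rw [if_neg h0]
      · rw [dif_neg ha]
        obtain ⟨s', hs'⟩ := hf'loc ⟨(a : ℕ) - α.1, by have := hfin a; omega⟩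
        exact ⟨⟨(s' : ℕ) + 1, hidx s'⟩, hs'⟩

lemma le_of_ch21 (π : Perm') (L : List Perm') (hL : ∀ α ∈ L, α.Le perm21)
    (h : HVG.Ch21 (⇑π.2) (fun _ => True) L.length) :
    (L.foldr Perm'.dsum emptyPerm).Le π := by
  obtain ⟨c, hc1, hc2⟩ := h
  obtain ⟨f, hmono, hiso, -⟩ := foldr_emb21 π L c hL
    (fun s => ⟨(hc1 s).2.2.1, (hc1 s).2.2.2⟩)
    (fun s t hst => hc2 s t hst)
  refine ⟨f, ?_, ?_⟩
  · intro a b hab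
    have := hmono a b hab
    exact this
  · intro a b
    exact hiso a b


lemma foldr_emb12 (π : Perm') : ∀ (L : List Perm')
    (c : Fin L.length → Fin π.1 × Fin π.1),
    (∀ α ∈ L, α.Le perm12) →
    (∀ s, ((c s).1 : ℕ) < ((c s).2 : ℕ) ∧ ((π.2 (c s).1 : ℕ)) < ((π.2 (c s).2 : ℕ))) →
    (∀ s t, s < t → ((c s).2 : ℕ) < ((c t).1 : ℕ) ∧
      ((π.2 (c t).2 : ℕ)) < ((π.2 (c s).1 : ℕ))) →
    ∃ f : Fin (L.foldr Perm'.skewSum emptyPerm).1 → Fin π.1,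
      (∀ a b : Fin (L.foldr Perm'.skewSum emptyPerm).1,
        (a : ℕ) < (b : ℕ) → (f a : ℕ) < (f b : ℕ)) ∧
      (∀ a b, (((L.foldr Perm'.skewSum emptyPerm).2 a : ℕ) <
          ((L.foldr Perm'.skewSum emptyPerm).2 b : ℕ))
        ↔ ((π.2 (f a) : ℕ) < (π.2 (f b) : ℕ))) ∧
      (∀ a, ∃ s, f a = (c s).1 ∨ f a = (c s).2) := by
  intro L
  induction L with
  | nil =>
    intro c _ _ _
    exact ⟨fun a => a.elim0, fun a => a.elim0, fun a => a.elim0, fun a => a.elim0⟩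
  | cons α L' ih =>
    intro c hLe hc1 hc2
    set ρ' := L'.foldr Perm'.skewSum emptyPerm with hρ'
    set z0 : Fin ((α :: L').length) := ⟨0, by simp⟩ with hz0
    have hidx : ∀ s' : Fin L'.length, ((s' : ℕ) + 1) < (α :: L').length := by
      intro s'
      have := s'.isLt
      simp only [List.length_cons]
      omega
    obtain ⟨f', hf'mono, hf'iso, hf'loc⟩ := ih (fun s' => c ⟨(s' : ℕ) + 1, hidx s'⟩)
      (fun α' h => hLe α' (List.mem_cons_of_mem _ h))
      (fun s' => hc1 _)
      (fun s' t' hst => hc2 ⟨(s' : ℕ) + 1, hidx s'⟩ ⟨(t' : ℕ) + 1, hidx t'⟩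
        (Fin.mk_lt_mk.mpr (Nat.succ_lt_succ hst)))
    obtain ⟨f2, hf2mono, hf2iso⟩ := hLe α List.mem_cons_self
    set g0 : Fin 2 → Fin π.1 := fun u => if (u : ℕ) = 0 then (c z0).1 else (c z0).2 with hg0
    have vz := hc1 z0
    have hg0a : ∀ u : Fin 2, ((g0 u : ℕ) ≤ ((c z0).2 : ℕ)) ∧
        ((π.2 (c z0).1 : ℕ) ≤ (π.2 (g0 u) : ℕ)) := by
      intro u
      simp only [hg0]
      by_cases h : (u : ℕ) = 0
      · rw [if_pos h]
        exact ⟨le_of_lt vz.1, le_refl _⟩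
      · rw [if_neg h]
        exact ⟨le_refl _, le_of_lt vz.2⟩
    have hloc' : ∀ b' : Fin ρ'.1, ((c z0).2 : ℕ) < (f' b' : ℕ) ∧
        ((π.2 (f' b') : ℕ)) < ((π.2 (c z0).1 : ℕ)) := by
      intro b'
      obtain ⟨s', hs'⟩ := hf'loc b'
      have h1 := hc2 z0 ⟨(s' : ℕ) + 1, hidx s'⟩ (Fin.mk_lt_mk.mpr (by omega))
      have h2 := hc1 ⟨(s' : ℕ) + 1, hidx s'⟩
      rcases hs' with h | h <;> rw [h]
      · exact ⟨h1.1, by omega⟩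
      · exact ⟨by omega, h1.2⟩
    have hfin : ∀ i : Fin ((α :: L').foldr Perm'.skewSum emptyPerm).1,
        (i : ℕ) < α.1 + ρ'.1 := fun i => i.isLt
    set f : Fin ((α :: L').foldr Perm'.skewSum emptyPerm).1 → Fin π.1 := fun i =>
      if h : (i : ℕ) < α.1 then g0 (f2 ⟨(i : ℕ), h⟩)
      else f' ⟨(i : ℕ) - α.1, by have := hfin i; omega⟩ with hf
    have ea : ∀ (i : Fin ((α :: L').foldr Perm'.skewSum emptyPerm).1) (h : (i : ℕ) < α.1),
        (((α :: L').foldr Perm'.skewSum emptyPerm).2 i : ℕ) =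
          ρ'.1 + (α.2 ⟨(i : ℕ), h⟩ : ℕ) := by
      intro i h
      have hi : i = Fin.castAdd ρ'.1 ⟨(i : ℕ), h⟩ := Fin.ext rfl
      conv_lhs => rw [hi]
      exact skew_val_left α ρ' ⟨(i : ℕ), h⟩
    have eb : ∀ (i : Fin ((α :: L').foldr Perm'.skewSum emptyPerm).1) (h : α.1 ≤ (i : ℕ))
        (hb : (i : ℕ) - α.1 < ρ'.1),
        (((α :: L').foldr Perm'.skewSum emptyPerm).2 i : ℕ) =
          (ρ'.2 ⟨(i : ℕ) - α.1, hb⟩ : ℕ) := by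
      intro i h hb
      have hi : i = Fin.natAdd α.1 ⟨(i : ℕ) - α.1, hb⟩ := Fin.ext (by
        show (i : ℕ) = α.1 + ((i : ℕ) - α.1)
        omega)
      conv_lhs => rw [hi]
      exact skew_val_right α ρ' _
    have g0iso : ∀ u v : Fin 2, ((perm12.2 u : ℕ) < (perm12.2 v : ℕ)) ↔
        ((π.2 (g0 u) : ℕ) < (π.2 (g0 v) : ℕ)) := by
      intro u v
      have hu := u.isLt
      have hv := v.isLt
      have pval : ∀ z : Fin 2, ((perm12.2 z : ℕ)) = (z : ℕ) := by decide
      rw [pval, pval]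
      simp only [hg0]
      have hv1 := vz.1
      have hv2 := vz.2
      by_cases h0 : (u : ℕ) = 0 <;> by_cases h1 : (v : ℕ) = 0
      · rw [if_pos h0, if_pos h1]
        omega
      · rw [if_pos h0, if_neg h1]
        omega
      · rw [if_neg h0, if_pos h1]
        omega
      · rw [if_neg h0, if_neg h1]
        omega
    refine ⟨f, ?_, ?_, ?_⟩
    · intro a b hab
      simp only [hf]
      by_cases ha : (a : ℕ) < α.1 <;> by_cases hb : (b : ℕ) < α.1
      · rw [dif_pos ha, dif_pos hb]
        have h2 : (f2 ⟨(a : ℕ), ha⟩ : ℕ) < (f2 ⟨(b : ℕ), hb⟩ : ℕ) :=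
          hf2mono (Fin.mk_lt_mk.mpr hab)
        have hu : ((f2 ⟨(a : ℕ), ha⟩ : Fin perm12.1) : ℕ) < 2 := (f2 ⟨(a : ℕ), ha⟩).isLt
        have hv : ((f2 ⟨(b : ℕ), hb⟩ : Fin perm12.1) : ℕ) < 2 := (f2 ⟨(b : ℕ), hb⟩).isLt
        have hu0 : ((f2 ⟨(a : ℕ), ha⟩ : Fin perm12.1) : ℕ) = 0 := by omega
        have hv1 : ¬ ((f2 ⟨(b : ℕ), hb⟩ : Fin perm12.1) : ℕ) = 0 := by omega
        simp only [hg0]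
        rw [if_pos hu0, if_neg hv1]
        exact vz.1
      · rw [dif_pos ha, dif_neg hb]
        have h1 := (hg0a (f2 ⟨(a : ℕ), ha⟩)).1
        have h2 := (hloc' ⟨(b : ℕ) - α.1, by have := hfin b; omega⟩).1
        omega
      · omega
      · rw [dif_neg ha, dif_neg hb]
        exact hf'mono _ _ (by simp only [Fin.val_mk]; omega)
    · intro a b
      by_cases ha : (a : ℕ) < α.1 <;> by_cases hb : (b : ℕ) < α.1
      · rw [ea a ha, ea b hb]
        simp only [hf]
        rw [dif_pos ha, dif_pos hb]
        constructor
        · intro hh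
          exact (g0iso _ _).mp ((hf2iso ⟨(a : ℕ), ha⟩ ⟨(b : ℕ), hb⟩).mp
            (by rw [Fin.lt_def]; omega))
        · intro hh
          have := (hf2iso ⟨(a : ℕ), ha⟩ ⟨(b : ℕ), hb⟩).mpr ((g0iso _ _).mpr hh)
          rw [Fin.lt_def] at this
          omega
      · rw [ea a ha, eb b (by omega) (by have := hfin b; omega)]
        simp only [hf]
        rw [dif_pos ha, dif_neg hb]
        apply iff_of_false
        · have := (ρ'.2 ⟨(b : ℕ) - α.1, by have := hfin b; omega⟩).isLt
          omega
        · have h1 := (hg0a (f2 ⟨(a : ℕ), ha⟩)).2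
          have h2 := (hloc' ⟨(b : ℕ) - α.1, by have := hfin b; omega⟩).2
          omega
      · rw [eb a (by omega) (by have := hfin a; omega), ea b hb]
        simp only [hf]
        rw [dif_neg ha, dif_pos hb]
        apply iff_of_true
        · have := (ρ'.2 ⟨(a : ℕ) - α.1, by have := hfin a; omega⟩).isLt
          omega
        · have h1 := (hg0a (f2 ⟨(b : ℕ), hb⟩)).2
          have h2 := (hloc' ⟨(a : ℕ) - α.1, by have := hfin a; omega⟩).2
          omega
      · rw [eb a (by omega) (by have := hfin a; omega), eb b (by omega) (by have := hfin b; omega)]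
        simp only [hf]
        rw [dif_neg ha, dif_neg hb]
        exact hf'iso _ _
    · intro a
      simp only [hf]
      by_cases ha : (a : ℕ) < α.1
      · rw [dif_pos ha]
        refine ⟨z0, ?_⟩
        simp only [hg0]
        by_cases h0 : ((f2 ⟨(a : ℕ), ha⟩ : Fin perm12.1) : ℕ) = 0
        · left
          rw [if_pos h0]
        · right
          rw [if_neg h0]
      · rw [dif_neg ha]
        obtain ⟨s', hs'⟩ := hf'loc ⟨(a : ℕ) - α.1, by have := hfin a; omega⟩
        exact ⟨⟨(s' : ℕ) + 1, hidx s'⟩, hs'⟩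

lemma le_of_ch12 (π : Perm') (L : List Perm') (hL : ∀ α ∈ L, α.Le perm12)
    (h : HVG.Ch12 (⇑π.2) (fun _ => True) L.length) :
    (L.foldr Perm'.skewSum emptyPerm).Le π := by
  obtain ⟨c, hc1, hc2⟩ := h
  obtain ⟨f, hmono, hiso, -⟩ := foldr_emb12 π L c hL
    (fun s => ⟨(hc1 s).2.2.1, (hc1 s).2.2.2⟩)
    (fun s t hst => hc2 s t hst)
  refine ⟨f, ?_, ?_⟩
  · intro a b hab
    exact hmono a b hab
  · intro a b
    exact hiso a b


def rho21 (k : ℕ) : Perm' := (List.replicate k perm21).foldr Perm'.dsum emptyPerm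

def rho12 (k : ℕ) : Perm' := (List.replicate k perm12).foldr Perm'.skewSum emptyPerm

lemma rho21_spec : ∀ k : ℕ, (rho21 k).1 = 2 * k ∧
    ∀ a : Fin (rho21 k).1, ((rho21 k).2 a : ℕ) =
      2 * ((a : ℕ) / 2) + (1 - (a : ℕ) % 2) := by
  intro k
  induction k with
  | zero =>
    exact ⟨rfl, fun a => a.elim0⟩
  | succ k ih =>
    have hp : perm21.1 = 2 := rfl
    constructor
    · show perm21.1 + (rho21 k).1 = 2 * (k + 1)
      rw [hp, ih.1]
      ring
    · intro a
      have hfin : (a : ℕ) < 2 + (rho21 k).1 := a.isLt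
      by_cases h : (a : ℕ) < 2
      · have hi : a = Fin.castAdd (rho21 k).1 ⟨(a : ℕ), h⟩ := Fin.ext rfl
        have hv : ((rho21 (k+1)).2 a : ℕ) = (perm21.2 ⟨(a : ℕ), h⟩ : ℕ) := by
          conv_lhs => rw [hi]
          exact dsum_val_left perm21 (rho21 k) ⟨(a : ℕ), h⟩
        have pval : ∀ z : Fin 2, ((perm21.2 z : ℕ)) = 1 - (z : ℕ) := by decide
        rw [hv, show ((perm21.2 ⟨(a : ℕ), h⟩ : ℕ)) = 1 - (((⟨(a : ℕ), h⟩ : Fin 2)) : ℕ) from pval ⟨(a : ℕ), h⟩]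
        have : ((⟨(a : ℕ), h⟩ : Fin 2) : ℕ) = (a : ℕ) := rfl
        rw [this]
        omega
      · have hb2 : (a : ℕ) - 2 < (rho21 k).1 := by omega
        have hi : a = Fin.natAdd perm21.1 ⟨(a : ℕ) - 2, hb2⟩ := Fin.ext (by
          show (a : ℕ) = perm21.1 + ((a : ℕ) - 2)
          rw [hp]
          omega)
        have hv : ((rho21 (k+1)).2 a : ℕ) =
            perm21.1 + ((rho21 k).2 ⟨(a : ℕ) - 2, hb2⟩ : ℕ) := by
          conv_lhs => rw [hi]
          exact dsum_val_right perm21 (rho21 k) _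
        rw [hv, ih.2 ⟨(a : ℕ) - 2, hb2⟩, hp]
        have : ((⟨(a : ℕ) - 2, hb2⟩ : Fin (rho21 k).1) : ℕ) = (a : ℕ) - 2 := rfl
        rw [this]
        omega

lemma rho12_spec : ∀ k : ℕ, (rho12 k).1 = 2 * k ∧
    ∀ a : Fin (rho12 k).1, ((rho12 k).2 a : ℕ) =
      (2 * k - 2 * ((a : ℕ) / 2) - 2) + (a : ℕ) % 2 := by
  intro k
  induction k with
  | zero =>
    exact ⟨rfl, fun a => a.elim0⟩
  | succ k ih =>
    have hp : perm12.1 = 2 := rfl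
    constructor
    · show perm12.1 + (rho12 k).1 = 2 * (k + 1)
      rw [hp, ih.1]
      ring
    · intro a
      have hfin : (a : ℕ) < 2 + (rho12 k).1 := a.isLt
      have hlen := ih.1
      by_cases h : (a : ℕ) < 2
      · have hi : a = Fin.castAdd (rho12 k).1 ⟨(a : ℕ), h⟩ := Fin.ext rfl
        have hv : ((rho12 (k+1)).2 a : ℕ) =
            (rho12 k).1 + (perm12.2 ⟨(a : ℕ), h⟩ : ℕ) := by
          conv_lhs => rw [hi]
          exact skew_val_left perm12 (rho12 k) ⟨(a : ℕ), h⟩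
        have pval : ∀ z : Fin 2, ((perm12.2 z : ℕ)) = (z : ℕ) := by decide
        rw [hv, show ((perm12.2 ⟨(a : ℕ), h⟩ : ℕ)) = (((⟨(a : ℕ), h⟩ : Fin 2)) : ℕ) from pval ⟨(a : ℕ), h⟩, hlen]
        have : ((⟨(a : ℕ), h⟩ : Fin 2) : ℕ) = (a : ℕ) := rfl
        rw [this]
        omega
      · have hb2 : (a : ℕ) - 2 < (rho12 k).1 := by omega
        have hi : a = Fin.natAdd perm12.1 ⟨(a : ℕ) - 2, hb2⟩ := Fin.ext (by
          show (a : ℕ) = perm12.1 + ((a : ℕ) - 2)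
          rw [hp]
          omega)
        have hv : ((rho12 (k+1)).2 a : ℕ) = ((rho12 k).2 ⟨(a : ℕ) - 2, hb2⟩ : ℕ) := by
          conv_lhs => rw [hi]
          exact skew_val_right perm12 (rho12 k) _
        rw [hv, ih.2 ⟨(a : ℕ) - 2, hb2⟩]
        have : ((⟨(a : ℕ) - 2, hb2⟩ : Fin (rho12 k).1) : ℕ) = (a : ℕ) - 2 := rfl
        rw [this]
        have hval2 := ih.1
        omega

lemma rho21_mem : ∀ k : ℕ, rho21 k ∈ sumClosure21 := by
  intro k
  refine ⟨List.replicate k perm21, ?_, rfl⟩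
  intro α hα
  rw [List.eq_of_mem_replicate hα]
  exact ⟨id, strictMono_id, fun a b => Iff.rfl⟩

lemma rho12_mem : ∀ k : ℕ, rho12 k ∈ skewClosure12 := by
  intro k
  refine ⟨List.replicate k perm12, ?_, rfl⟩
  intro α hα
  rw [List.eq_of_mem_replicate hα]
  exact ⟨id, strictMono_id, fun a b => Iff.rfl⟩


open scoped Classical in
lemma pigeonhole21 {m n : ℕ} (M : Fin m → Fin n → Set Perm')
    (hM : ∀ i j, IsMonotoneClass (M i j) ∨ M i j = ∅) (k : ℕ) (π : Perm')
    (hlen : π.1 = 2 * k)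
    (hval : ∀ a : Fin π.1, ((π.2 a : ℕ)) = 2 * ((a : ℕ) / 2) + (1 - (a : ℕ) % 2))
    (hG : Griddable M π) : k ≤ m * n + m + n := by
  obtain ⟨κ, ⟨hcol, hrow⟩, hcell⟩ := hG
  set p : Fin k → Fin π.1 := fun j => ⟨2 * (j : ℕ), by have := j.isLt; omega⟩ with hp
  set q : Fin k → Fin π.1 := fun j => ⟨2 * (j : ℕ) + 1, by have := j.isLt; omega⟩ with hq
  have vp : ∀ j : Fin k, (π.2 (p j) : ℕ) = 2 * (j : ℕ) + 1 := by
    intro j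
    have h := hval (p j)
    have e : ((p j) : ℕ) = 2 * (j : ℕ) := rfl
    rw [e] at h
    omega
  have vq : ∀ j : Fin k, (π.2 (q j) : ℕ) = 2 * (j : ℕ) := by
    intro j
    have h := hval (q j)
    have e : ((q j) : ℕ) = 2 * (j : ℕ) + 1 := rfl
    rw [e] at h
    omega
  have hcol' : ∀ (i i' : Fin π.1), (i : ℕ) ≤ (i' : ℕ) → (κ i).1 ≤ (κ i').1 :=
    fun i i' h => hcol i i' h
  have hrowv : ∀ (i i' : Fin π.1), (π.2 i : ℕ) ≤ (π.2 i' : ℕ) → (κ i).2 ≤ (κ i').2 :=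
    fun i i' h => hrow i i' h
  set Sc := Finset.univ.filter (fun j : Fin k => κ (p j) = κ (q j)) with hSc
  set Sx := Finset.univ.filter (fun j : Fin k => (κ (p j)).1 < (κ (q j)).1) with hSx
  set Sy := Finset.univ.filter
    (fun j : Fin k => ¬ κ (p j) = κ (q j) ∧ ¬ (κ (p j)).1 < (κ (q j)).1) with hSy
  have hyrow : ∀ j ∈ Sy, (κ (q j)).2 < (κ (p j)).2 := by
    intro j hj
    obtain ⟨-, hne, hnx⟩ := Finset.mem_filter.mp hj
    have h1 : (κ (p j)).1 ≤ (κ (q j)).1 := hcol' _ _ (by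
      show 2 * (j : ℕ) ≤ 2 * (j : ℕ) + 1
      omega)
    have hcoleq : (κ (p j)).1 = (κ (q j)).1 := le_antisymm h1 (not_lt.mp hnx)
    have h2 : (κ (q j)).2 ≤ (κ (p j)).2 := hrowv _ _ (by rw [vq, vp]; omega)
    rcases lt_or_eq_of_le h2 with h | h
    · exact h
    · exact absurd (Prod.ext hcoleq h.symm) hne
  have hSx_card : Sx.card ≤ m := by
    have key : ∀ a b : Fin k, a ∈ Sx → (a : ℕ) < (b : ℕ) → (κ (p a)).1 < (κ (p b)).1 := by
      intro a b ha hab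
      have h1 : (κ (p a)).1 < (κ (q a)).1 := (Finset.mem_filter.mp ha).2
      have h2 : (κ (q a)).1 ≤ (κ (p b)).1 := hcol' _ _ (by
        show 2 * (a : ℕ) + 1 ≤ 2 * (b : ℕ)
        omega)
      exact lt_of_lt_of_le h1 h2
    have hinj : Set.InjOn (fun j => (κ (p j)).1) ↑Sx := by
      intro j hj j' hj' heq
      simp only [Finset.mem_coe] at hj hj'
      by_contra hne
      rcases lt_trichotomy (j : ℕ) (j' : ℕ) with h | h | h
      · have := key j j' hj h
        exact (ne_of_lt this) heq
      · exact hne (Fin.ext h)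
      · have := key j' j hj' h
        exact (ne_of_lt this) heq.symm
    have := Finset.card_le_card_of_injOn (s := Sx) (t := Finset.univ)
      (fun j => (κ (p j)).1) (fun _ _ => Finset.mem_univ _) hinj
    simpa using this
  have hSy_card : Sy.card ≤ n := by
    have key : ∀ a b : Fin k, a ∈ Sy → (a : ℕ) < (b : ℕ) → (κ (q a)).2 < (κ (q b)).2 := by
      intro a b ha hab
      have h1 : (κ (q a)).2 < (κ (p a)).2 := hyrow a ha
      have h2 : (κ (p a)).2 ≤ (κ (q b)).2 := hrowv _ _ (by rw [vq, vp]; omega)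
      exact lt_of_lt_of_le h1 h2
    have hinj : Set.InjOn (fun j => (κ (q j)).2) ↑Sy := by
      intro j hj j' hj' heq
      simp only [Finset.mem_coe] at hj hj'
      by_contra hne
      rcases lt_trichotomy (j : ℕ) (j' : ℕ) with h | h | h
      · have := key j j' hj h
        exact (ne_of_lt this) heq
      · exact hne (Fin.ext h)
      · have := key j' j hj' h
        exact (ne_of_lt this) heq.symm
    have := Finset.card_le_card_of_injOn (s := Sy) (t := Finset.univ)
      (fun j => (κ (q j)).2) (fun _ _ => Finset.mem_univ _) hinj
    simpa using this
  have hSc_card : Sc.card ≤ m * n := by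
    have key : ∀ a b : Fin k, a ∈ Sc → b ∈ Sc → (a : ℕ) < (b : ℕ) →
        κ (p a) ≠ κ (p b) := by
      intro a b ha hb hab heq
      have hpa := (Finset.mem_filter.mp ha).2
      have hpb := (Finset.mem_filter.mp hb).2
      rcases hcell (κ (p a)).1 (κ (p a)).2 with hemp |
        ⟨τ, hτ, g, hgm, hgmem, hgsur, hgiso⟩
      · exact hemp (p a) (by rw [Prod.mk.eta])
      · have hin : ∀ i : Fin π.1, κ i = κ (p a) →
            i ∈ {i | κ i = ((κ (p a)).1, (κ (p a)).2)} := by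
          intro i hi
          show κ i = ((κ (p a)).1, (κ (p a)).2)
          rw [Prod.mk.eta]
          exact hi
        obtain ⟨u1, hu1⟩ := hgsur (p a) (hin _ rfl)
        obtain ⟨u2, hu2⟩ := hgsur (q a) (hin _ hpa.symm)
        obtain ⟨u3, hu3⟩ := hgsur (p b) (hin _ heq.symm)
        rcases hM (κ (p a)).1 (κ (p a)).2 with hmono | hempty
        swap
        · rw [hempty] at hτ
          exact absurd hτ (Set.notMem_empty τ)
        rcases hmono with h21 | h12
        · rw [h21] at hτ
          have hlt : g u1 < g u2 := by
            rw [hu1, hu2]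
            exact Fin.mk_lt_mk.mpr (by omega)
          have hu12 : u1 < u2 := hgm.lt_iff_lt.mp hlt
          have hfalse : ¬ (π.2 (g u1) < π.2 (g u2)) := by
            rw [hu1, hu2]
            intro hcon
            have e1 := vp a
            have e2 := vq a
            rw [Fin.lt_def] at hcon
            omega
          have hle := hτ u1 u2 (le_of_lt hu12)
          have hlt2 : τ.2 u1 < τ.2 u2 :=
            lt_of_le_of_ne hle (fun h => (ne_of_lt hu12) (τ.2.injective h))
          exact hfalse ((hgiso u1 u2).mp hlt2)
        · rw [h12] at hτ
          have hlt : g u2 < g u3 := by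
            rw [hu2, hu3]
            exact Fin.mk_lt_mk.mpr (by omega)
          have hu23 : u2 < u3 := hgm.lt_iff_lt.mp hlt
          have htrue : π.2 (g u2) < π.2 (g u3) := by
            rw [hu2, hu3, Fin.lt_def]
            have e1 := vq a
            have e2 := vp b
            omega
          have hlt2 := (hgiso u2 u3).mpr htrue
          have hge := hτ u2 u3 (le_of_lt hu23)
          exact absurd hlt2 (not_lt.mpr hge)
    have hinj : Set.InjOn (fun j => κ (p j)) ↑Sc := by
      intro j hj j' hj' heq
      simp only [Finset.mem_coe] at hj hj'
      by_contra hne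
      rcases lt_trichotomy (j : ℕ) (j' : ℕ) with h | h | h
      · exact key j j' hj hj' h heq
      · exact hne (Fin.ext h)
      · exact key j' j hj' hj h heq.symm
    have := Finset.card_le_card_of_injOn (s := Sc) (t := (Finset.univ : Finset (Fin m × Fin n)))
      (fun j => κ (p j)) (fun _ _ => Finset.mem_univ _) hinj
    simpa using this
  have hcover : (Finset.univ : Finset (Fin k)) ⊆ Sc ∪ Sx ∪ Sy := by
    intro j _
    by_cases h1 : κ (p j) = κ (q j)
    · exact Finset.mem_union_left _ (Finset.mem_union_left _
        (Finset.mem_filter.mpr ⟨Finset.mem_univ _, h1⟩))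
    by_cases h2 : (κ (p j)).1 < (κ (q j)).1
    · exact Finset.mem_union_left _ (Finset.mem_union_right _
        (Finset.mem_filter.mpr ⟨Finset.mem_univ _, h2⟩))
    · exact Finset.mem_union_right _ (Finset.mem_filter.mpr ⟨Finset.mem_univ _, h1, h2⟩)
  have h1 : (Finset.univ : Finset (Fin k)).card = k := by
    rw [Finset.card_univ, Fintype.card_fin]
  have h2 := Finset.card_le_card hcover
  have h3 := Finset.card_union_le (Sc ∪ Sx) Sy
  have h4 := Finset.card_union_le Sc Sx
  omega


open scoped Classical in
lemma pigeonhole12 {m n : ℕ} (M : Fin m → Fin n → Set Perm')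
    (hM : ∀ i j, IsMonotoneClass (M i j) ∨ M i j = ∅) (k : ℕ) (π : Perm')
    (hlen : π.1 = 2 * k)
    (hval : ∀ a : Fin π.1, ((π.2 a : ℕ)) = (2 * k - 2 * ((a : ℕ) / 2) - 2) + (a : ℕ) % 2)
    (hG : Griddable M π) : k ≤ m * n + m + n := by
  obtain ⟨κ, ⟨hcol, hrow⟩, hcell⟩ := hG
  set p : Fin k → Fin π.1 := fun j => ⟨2 * (j : ℕ), by have := j.isLt; omega⟩ with hp
  set q : Fin k → Fin π.1 := fun j => ⟨2 * (j : ℕ) + 1, by have := j.isLt; omega⟩ with hq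
  have vp : ∀ j : Fin k, (π.2 (p j) : ℕ) = 2 * k - 2 * (j : ℕ) - 2 := by
    intro j
    have h := hval (p j)
    have e : ((p j) : ℕ) = 2 * (j : ℕ) := rfl
    rw [e] at h
    have := j.isLt
    omega
  have vq : ∀ j : Fin k, (π.2 (q j) : ℕ) = 2 * k - 2 * (j : ℕ) - 1 := by
    intro j
    have h := hval (q j)
    have e : ((q j) : ℕ) = 2 * (j : ℕ) + 1 := rfl
    rw [e] at h
    have := j.isLt
    omega
  have hcol' : ∀ (i i' : Fin π.1), (i : ℕ) ≤ (i' : ℕ) → (κ i).1 ≤ (κ i').1 :=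
    fun i i' h => hcol i i' h
  have hrowv : ∀ (i i' : Fin π.1), (π.2 i : ℕ) ≤ (π.2 i' : ℕ) → (κ i).2 ≤ (κ i').2 :=
    fun i i' h => hrow i i' h
  set Sc := Finset.univ.filter (fun j : Fin k => κ (p j) = κ (q j)) with hSc
  set Sx := Finset.univ.filter (fun j : Fin k => (κ (p j)).1 < (κ (q j)).1) with hSx
  set Sy := Finset.univ.filter
    (fun j : Fin k => ¬ κ (p j) = κ (q j) ∧ ¬ (κ (p j)).1 < (κ (q j)).1) with hSy
  have hyrow : ∀ j ∈ Sy, (κ (p j)).2 < (κ (q j)).2 := by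
    intro j hj
    obtain ⟨-, hne, hnx⟩ := Finset.mem_filter.mp hj
    have h1 : (κ (p j)).1 ≤ (κ (q j)).1 := hcol' _ _ (by
      show 2 * (j : ℕ) ≤ 2 * (j : ℕ) + 1
      omega)
    have hcoleq : (κ (p j)).1 = (κ (q j)).1 := le_antisymm h1 (not_lt.mp hnx)
    have hjk := j.isLt
    have h2 : (κ (p j)).2 ≤ (κ (q j)).2 := hrowv _ _ (by rw [vq, vp]; omega)
    rcases lt_or_eq_of_le h2 with h | h
    · exact h
    · exact absurd (Prod.ext hcoleq h) hne
  have hSx_card : Sx.card ≤ m := by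
    have key : ∀ a b : Fin k, a ∈ Sx → (a : ℕ) < (b : ℕ) → (κ (p a)).1 < (κ (p b)).1 := by
      intro a b ha hab
      have h1 : (κ (p a)).1 < (κ (q a)).1 := (Finset.mem_filter.mp ha).2
      have h2 : (κ (q a)).1 ≤ (κ (p b)).1 := hcol' _ _ (by
        show 2 * (a : ℕ) + 1 ≤ 2 * (b : ℕ)
        omega)
      exact lt_of_lt_of_le h1 h2
    have hinj : Set.InjOn (fun j => (κ (p j)).1) ↑Sx := by
      intro j hj j' hj' heq
      simp only [Finset.mem_coe] at hj hj'
      by_contra hne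
      rcases lt_trichotomy (j : ℕ) (j' : ℕ) with h | h | h
      · have := key j j' hj h
        exact (ne_of_lt this) heq
      · exact hne (Fin.ext h)
      · have := key j' j hj' h
        exact (ne_of_lt this) heq.symm
    have := Finset.card_le_card_of_injOn (s := Sx) (t := Finset.univ)
      (fun j => (κ (p j)).1) (fun _ _ => Finset.mem_univ _) hinj
    simpa using this
  have hSy_card : Sy.card ≤ n := by
    have key : ∀ a b : Fin k, b ∈ Sy → (a : ℕ) < (b : ℕ) → (κ (p b)).2 < (κ (p a)).2 := by
      intro a b hb hab
      have hak := a.isLt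
      have hbk := b.isLt
      have h1 : (κ (p b)).2 < (κ (q b)).2 := hyrow b hb
      have h2 : (κ (q b)).2 ≤ (κ (p a)).2 := hrowv _ _ (by rw [vq, vp]; omega)
      exact lt_of_lt_of_le h1 h2
    have hinj : Set.InjOn (fun j => (κ (p j)).2) ↑Sy := by
      intro j hj j' hj' heq
      simp only [Finset.mem_coe] at hj hj'
      by_contra hne
      rcases lt_trichotomy (j : ℕ) (j' : ℕ) with h | h | h
      · have := key j j' hj' h
        exact (ne_of_lt this) heq.symm
      · exact hne (Fin.ext h)
      · have := key j' j hj h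
        exact (ne_of_lt this) heq
    have := Finset.card_le_card_of_injOn (s := Sy) (t := Finset.univ)
      (fun j => (κ (p j)).2) (fun _ _ => Finset.mem_univ _) hinj
    simpa using this
  have hSc_card : Sc.card ≤ m * n := by
    have key : ∀ a b : Fin k, a ∈ Sc → b ∈ Sc → (a : ℕ) < (b : ℕ) →
        κ (p a) ≠ κ (p b) := by
      intro a b ha hb hab heq
      have hak := a.isLt
      have hbk := b.isLt
      have hpa := (Finset.mem_filter.mp ha).2
      have hpb := (Finset.mem_filter.mp hb).2
      rcases hcell (κ (p a)).1 (κ (p a)).2 with hemp |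
        ⟨τ, hτ, g, hgm, hgmem, hgsur, hgiso⟩
      · exact hemp (p a) (by rw [Prod.mk.eta])
      · have hin : ∀ i : Fin π.1, κ i = κ (p a) →
            i ∈ {i | κ i = ((κ (p a)).1, (κ (p a)).2)} := by
          intro i hi
          show κ i = ((κ (p a)).1, (κ (p a)).2)
          rw [Prod.mk.eta]
          exact hi
        obtain ⟨u1, hu1⟩ := hgsur (p a) (hin _ rfl)
        obtain ⟨u2, hu2⟩ := hgsur (q a) (hin _ hpa.symm)
        obtain ⟨u3, hu3⟩ := hgsur (p b) (hin _ heq.symm)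
        rcases hM (κ (p a)).1 (κ (p a)).2 with hmono | hempty
        swap
        · rw [hempty] at hτ
          exact absurd hτ (Set.notMem_empty τ)
        rcases hmono with h21 | h12
        · rw [h21] at hτ
          have hlt : g u1 < g u3 := by
            rw [hu1, hu3]
            exact Fin.mk_lt_mk.mpr (by omega)
          have hu13 : u1 < u3 := hgm.lt_iff_lt.mp hlt
          have hfalse : ¬ (π.2 (g u1) < π.2 (g u3)) := by
            rw [hu1, hu3]
            intro hcon
            have e1 := vp a
            have e2 := vp b
            rw [Fin.lt_def] at hcon
            omega
          have hle := hτ u1 u3 (le_of_lt hu13)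
          have hlt2 : τ.2 u1 < τ.2 u3 :=
            lt_of_le_of_ne hle (fun h => (ne_of_lt hu13) (τ.2.injective h))
          exact hfalse ((hgiso u1 u3).mp hlt2)
        · rw [h12] at hτ
          have hlt : g u1 < g u2 := by
            rw [hu1, hu2]
            exact Fin.mk_lt_mk.mpr (by omega)
          have hu12 : u1 < u2 := hgm.lt_iff_lt.mp hlt
          have htrue : π.2 (g u1) < π.2 (g u2) := by
            rw [hu1, hu2, Fin.lt_def]
            have e1 := vp a
            have e2 := vq a
            omega
          have hlt2 := (hgiso u1 u2).mpr htrue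
          have hge := hτ u1 u2 (le_of_lt hu12)
          exact absurd hlt2 (not_lt.mpr hge)
    have hinj : Set.InjOn (fun j => κ (p j)) ↑Sc := by
      intro j hj j' hj' heq
      simp only [Finset.mem_coe] at hj hj'
      by_contra hne
      rcases lt_trichotomy (j : ℕ) (j' : ℕ) with h | h | h
      · exact key j j' hj hj' h heq
      · exact hne (Fin.ext h)
      · exact key j' j hj' hj h heq.symm
    have := Finset.card_le_card_of_injOn (s := Sc) (t := (Finset.univ : Finset (Fin m × Fin n)))
      (fun j => κ (p j)) (fun _ _ => Finset.mem_univ _) hinj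
    simpa using this
  have hcover : (Finset.univ : Finset (Fin k)) ⊆ Sc ∪ Sx ∪ Sy := by
    intro j _
    by_cases h1 : κ (p j) = κ (q j)
    · exact Finset.mem_union_left _ (Finset.mem_union_left _
        (Finset.mem_filter.mpr ⟨Finset.mem_univ _, h1⟩))
    by_cases h2 : (κ (p j)).1 < (κ (q j)).1
    · exact Finset.mem_union_left _ (Finset.mem_union_right _
        (Finset.mem_filter.mpr ⟨Finset.mem_univ _, h2⟩))
    · exact Finset.mem_union_right _ (Finset.mem_filter.mpr ⟨Finset.mem_univ _, h1, h2⟩)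
  have h1 : (Finset.univ : Finset (Fin k)).card = k := by
    rw [Finset.card_univ, Fintype.card_fin]
  have h2 := Finset.card_le_card hcover
  have h3 := Finset.card_union_le (Sc ∪ Sx) Sy
  have h4 := Finset.card_union_le Sc Sx
  omega

end HVG4

/-- **Corollary.**  A permutation class `C` is monotone griddable if and only
if it contains neither the class `⊕21` nor the class `⊖12`. -/
theorem monotoneGriddable_iff (C : Set Perm') (hC : IsPermClass C) :
    MonotoneGriddable C ↔ (¬ sumClosure21 ⊆ C ∧ ¬ skewClosure12 ⊆ C) := by
  constructor
  · rintro ⟨m, n, M, hM, hG⟩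
    constructor
    · intro hsub
      have hmem : HVG4.rho21 (m*n+m+n+1) ∈ C := hsub (HVG4.rho21_mem _)
      have hpig := HVG4.pigeonhole21 M hM (m*n+m+n+1) (HVG4.rho21 (m*n+m+n+1))
        (HVG4.rho21_spec _).1 (HVG4.rho21_spec _).2 (hG _ hmem)
      omega
    · intro hsub
      have hmem : HVG4.rho12 (m*n+m+n+1) ∈ C := hsub (HVG4.rho12_mem _)
      have hpig := HVG4.pigeonhole12 M hM (m*n+m+n+1) (HVG4.rho12 (m*n+m+n+1))
        (HVG4.rho12_spec _).1 (HVG4.rho12_spec _).2 (hG _ hmem)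
      omega
  · rintro ⟨h1, h2⟩
    obtain ⟨ρ, hρS, hρC⟩ := Set.not_subset.mp h1
    obtain ⟨σ, hσS, hσC⟩ := Set.not_subset.mp h2
    obtain ⟨L, hL, hLeq⟩ := hρS
    obtain ⟨L', hL', hLeq'⟩ := hσS
    apply HVG3.MonotoneGriddable_of_forb C (max L.length 1) (max L'.length 1)
      (le_max_right _ _) (le_max_right _ _)
    intro π hπ
    constructor
    · intro hch
      apply hρC
      apply hC π hπ ρ
      rw [hLeq]
      by_cases h0 : L.length = 0
      · rw [List.length_eq_zero_iff.mp h0]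
        exact ⟨fun a => a.elim0, fun a => a.elim0, fun a => a.elim0⟩
      · have hmax : max L.length 1 = L.length := by omega
        rw [hmax] at hch
        exact HVG4.le_of_ch21 π L hL hch
    · intro hch
      apply hσC
      apply hC π hπ σ
      rw [hLeq']
      by_cases h0 : L'.length = 0
      · rw [List.length_eq_zero_iff.mp h0]
        exact ⟨fun a => a.elim0, fun a => a.elim0, fun a => a.elim0⟩
      · have hmax : max L'.length 1 = L'.length := by omega
        rw [hmax] at hch
        exact HVG4.le_of_ch12 π L' hL' hch
end

section
/- Let M be a gridding matrix and let A be an antichain of permutations such that infinitely many elements of A are strongly uniquely M-griddable. Then for every gridding matrix N that is equivalent to M under some grid mapping, the grid class Grid(N) is not partially well-ordered. -/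
/-! Gridded permutations (a permutation together with a fixed gridding) and
grid mappings: compositions of the grid inverse, column reverses, row
complements and row/column permutations, acting both on gridding matrices and
on gridded permutations (together with the induced correspondence of points). -/

/-- An `m × n` gridded permutation. -/
structure GriddedPerm (m n : ℕ) where
  len : ℕ
  e : Equiv.Perm (Fin len)
  κ : Fin len → Fin m × Fin n
  col_mono : ∀ i i' : Fin len, i ≤ i' → (κ i).1 ≤ (κ i').1
  row_mono : ∀ i i' : Fin len, e i ≤ e i' → (κ i).2 ≤ (κ i').2

namespace GriddedPerm

/-- The underlying permutation of a gridded permutation. -/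
def toPerm {m n : ℕ} (g : GriddedPerm m n) : Perm' := ⟨g.len, g.e⟩

/-- The gridded permutation `g` is `M`-gridded. -/
def InMatrix {m n : ℕ} (M : Fin m → Fin n → Set Perm') (g : GriddedPerm m n) : Prop :=
  IsMGridding M g.toPerm g.κ

end GriddedPerm

/-- Gridded containment `α ≤ π` of gridded permutations: a pattern embedding
respecting the cells of the griddings. -/
def GriddedLe {m n : ℕ} (α π : GriddedPerm m n) : Prop :=
  ∃ f : Fin α.len → Fin π.len, StrictMono f ∧
    (∀ a b, (α.e a < α.e b ↔ π.e (f a) < π.e (f b))) ∧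
    ∀ a, π.κ (f a) = α.κ a

/-- The data of a mapping of `m × n` grids to `m' × n'` grids: an action on
gridding matrices, an action on gridded permutations, and the induced
correspondence on points. -/
structure GMap (m n m' n' : ℕ) where
  onMat : (Fin m → Fin n → Set Perm') → (Fin m' → Fin n' → Set Perm')
  onGrid : GriddedPerm m n → GriddedPerm m' n'
  corr : (g : GriddedPerm m n) → Fin g.len → Fin (onGrid g).len

/-- Composition of grid maps. -/
def GMap.comp {m n m' n' m'' n'' : ℕ} (F : GMap m n m' n') (G : GMap m' n' m'' n'') :
    GMap m n m'' n'' where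
  onMat := fun M => G.onMat (F.onMat M)
  onGrid := fun g => G.onGrid (F.onGrid g)
  corr := fun g i => G.corr (F.onGrid g) (F.corr g i)

/-- `h` reverses the order of the set `S` and fixes everything outside it. -/
def BlockRev {l : ℕ} (S : Set (Fin l)) (h : Equiv.Perm (Fin l)) : Prop :=
  (∀ p, p ∉ S → h p = p) ∧ (∀ p, p ∈ S → h p ∈ S) ∧
  ∀ p ∈ S, ∀ q ∈ S, (p < q ↔ h q < h p)

/-- The grid inverse on matrices: `(φ M) i j = (M j i)⁻¹`. -/
def matInverse {m n : ℕ} (M : Fin m → Fin n → Set Perm') : Fin n → Fin m → Set Perm' :=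
  fun i j => Perm'.inverse '' M j i

/-- Column reverse on matrices. -/
def matColRev {m n : ℕ} (s : Fin m) (M : Fin m → Fin n → Set Perm') :
    Fin m → Fin n → Set Perm' :=
  fun i j => if i = s then Perm'.reverse '' M i j else M i j

/-- Row complement on matrices. -/
def matRowCompl {m n : ℕ} (t : Fin n) (M : Fin m → Fin n → Set Perm') :
    Fin m → Fin n → Set Perm' :=
  fun i j => if j = t then Perm'.complement '' M i j else M i j

/-- Column permutation on matrices: `(μ M) i j = M (μ i) j`. -/
def matColPerm {m n : ℕ} (μ : Equiv.Perm (Fin m)) (M : Fin m → Fin n → Set Perm') :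
    Fin m → Fin n → Set Perm' := fun i j => M (μ i) j

/-- Row permutation on matrices: `(ν M) i j = M i (ν j)`. -/
def matRowPerm {m n : ℕ} (ν : Equiv.Perm (Fin n)) (M : Fin m → Fin n → Set Perm') :
    Fin m → Fin n → Set Perm' := fun i j => M i (ν j)

/-- The grid inverse on gridded permutations: it takes the inverse permutation
and interchanges the vertical and horizontal dividers, so the point at
position `v` of the image is the (inverted) point of value `v`. -/
def SpecInverse {m n : ℕ} (g : GriddedPerm m n) (out : GriddedPerm n m)
    (c : Fin g.len → Fin out.len) : Prop :=
  ∃ hl : g.len = out.len,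
    (∀ i : Fin g.len, c i = Fin.cast hl (g.e i)) ∧
    (∀ v : Fin out.len, (out.e v : ℕ) = (g.e.symm (Fin.cast hl.symm v) : ℕ)) ∧
    (∀ v : Fin out.len,
      out.κ v = ((g.κ (g.e.symm (Fin.cast hl.symm v))).2,
                 (g.κ (g.e.symm (Fin.cast hl.symm v))).1))

/-- Column reverse on gridded permutations: the left-to-right order of the
points of column `s` is reversed (via the involution `h`). -/
def SpecColRev {m n : ℕ} (s : Fin m) (g out : GriddedPerm m n)
    (c : Fin g.len → Fin out.len) : Prop :=
  ∃ (hl : g.len = out.len) (h : Equiv.Perm (Fin g.len)),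
    BlockRev {p : Fin g.len | (g.κ p).1 = s} h ∧
    (∀ p : Fin g.len, c p = Fin.cast hl (h.symm p)) ∧
    (∀ i : Fin out.len, (out.e i : ℕ) = (g.e (h (Fin.cast hl.symm i)) : ℕ)) ∧
    (∀ i : Fin out.len, out.κ i = g.κ (h (Fin.cast hl.symm i)))

/-- Row complement on gridded permutations: the values of the points of row `t`
are reflected top-to-bottom (via the involution `h` on values). -/
def SpecRowCompl {m n : ℕ} (t : Fin n) (g out : GriddedPerm m n)
    (c : Fin g.len → Fin out.len) : Prop :=
  ∃ (hl : g.len = out.len) (h : Equiv.Perm (Fin g.len)),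
    BlockRev {v : Fin g.len | (g.κ (g.e.symm v)).2 = t} h ∧
    (∀ p : Fin g.len, c p = Fin.cast hl p) ∧
    (∀ i : Fin out.len, (out.e i : ℕ) = (h (g.e (Fin.cast hl.symm i)) : ℕ)) ∧
    (∀ i : Fin out.len, out.κ i = g.κ (Fin.cast hl.symm i))

/-- Column permutation on gridded permutations: the column blocks of points are
rearranged according to `μ`; `h i` is the old position of the point at new
position `i`, so new positions are sorted by new column and then by old
position. -/
def SpecColPerm {m n : ℕ} (μ : Equiv.Perm (Fin m)) (g out : GriddedPerm m n)
    (c : Fin g.len → Fin out.len) : Prop :=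
  ∃ (hl : g.len = out.len) (h : Equiv.Perm (Fin g.len)),
    (∀ p q : Fin g.len, (p < q ↔
      (μ.symm (g.κ (h p)).1 < μ.symm (g.κ (h q)).1 ∨
        ((g.κ (h p)).1 = (g.κ (h q)).1 ∧ h p < h q)))) ∧
    (∀ p : Fin g.len, c p = Fin.cast hl (h.symm p)) ∧
    (∀ i : Fin out.len, (out.e i : ℕ) = (g.e (h (Fin.cast hl.symm i)) : ℕ)) ∧
    (∀ i : Fin out.len, out.κ i =
      (μ.symm (g.κ (h (Fin.cast hl.symm i))).1, (g.κ (h (Fin.cast hl.symm i))).2))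

/-- Row permutation on gridded permutations: the row blocks of points are
rearranged according to `ν`; `h v` is the new value of the point of old value
`v`, so new values are sorted by new row and then by old value. -/
def SpecRowPerm {m n : ℕ} (ν : Equiv.Perm (Fin n)) (g out : GriddedPerm m n)
    (c : Fin g.len → Fin out.len) : Prop :=
  ∃ (hl : g.len = out.len) (h : Equiv.Perm (Fin g.len)),
    (∀ v w : Fin g.len, (h v < h w ↔
      (ν.symm (g.κ (g.e.symm v)).2 < ν.symm (g.κ (g.e.symm w)).2 ∨
        ((g.κ (g.e.symm v)).2 = (g.κ (g.e.symm w)).2 ∧ v < w)))) ∧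
    (∀ p : Fin g.len, c p = Fin.cast hl p) ∧
    (∀ i : Fin out.len, (out.e i : ℕ) = (h (g.e (Fin.cast hl.symm i)) : ℕ)) ∧
    (∀ i : Fin out.len, out.κ i =
      ((g.κ (Fin.cast hl.symm i)).1, ν.symm (g.κ (Fin.cast hl.symm i)).2))

/-- A grid mapping: any composition of the grid inverse, column reverses, row
complements, and row and column permutations. -/
inductive IsGridMapping : {m n m' n' : ℕ} → GMap m n m' n' → Prop
  | inverse {m n : ℕ} (F : GMap m n n m)
      (hM : ∀ M, F.onMat M = matInverse M)
      (hG : ∀ g, SpecInverse g (F.onGrid g) (F.corr g)) : IsGridMapping F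
  | colRev {m n : ℕ} (s : Fin m) (F : GMap m n m n)
      (hM : ∀ M, F.onMat M = matColRev s M)
      (hG : ∀ g, SpecColRev s g (F.onGrid g) (F.corr g)) : IsGridMapping F
  | rowCompl {m n : ℕ} (t : Fin n) (F : GMap m n m n)
      (hM : ∀ M, F.onMat M = matRowCompl t M)
      (hG : ∀ g, SpecRowCompl t g (F.onGrid g) (F.corr g)) : IsGridMapping F
  | colPerm {m n : ℕ} (μ : Equiv.Perm (Fin m)) (F : GMap m n m n)
      (hM : ∀ M, F.onMat M = matColPerm μ M)
      (hG : ∀ g, SpecColPerm μ g (F.onGrid g) (F.corr g)) : IsGridMapping F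
  | rowPerm {m n : ℕ} (ν : Equiv.Perm (Fin n)) (F : GMap m n m n)
      (hM : ∀ M, F.onMat M = matRowPerm ν M)
      (hG : ∀ g, SpecRowPerm ν g (F.onGrid g) (F.corr g)) : IsGridMapping F
  | comp {m n m' n' m'' n'' : ℕ} (F : GMap m n m' n') (G : GMap m' n' m'' n'')
      (hF : IsGridMapping F) (hG : IsGridMapping G) : IsGridMapping (F.comp G)

/-- `κ` is the unique `M`-gridding of `π`. -/
def UniqueMGridding {m n : ℕ} (M : Fin m → Fin n → Set Perm') (π : Perm')
    (κ : Fin π.1 → Fin m × Fin n) : Prop :=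
  IsMGridding M π κ ∧ ∀ κ', IsMGridding M π κ' → κ' = κ

/-- `π` is strongly uniquely `M`-griddable: it has a unique `M`-gridding and,
for every grid mapping `f`, the image gridded permutation carries the unique
`f(M)`-gridding of its underlying permutation. -/
def StronglyUniquelyGriddable {m n : ℕ} (M : Fin m → Fin n → Set Perm') (π : Perm') : Prop :=
  ∃ g : GriddedPerm m n, g.toPerm = π ∧
    UniqueMGridding M g.toPerm g.κ ∧
    ∀ (m' n' : ℕ) (F : GMap m n m' n'), IsGridMapping F →
      UniqueMGridding (F.onMat M) (F.onGrid g).toPerm (F.onGrid g).κ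


/-! ### Auxiliary lemmas -/

section Aux

lemma finCastCast {a b : ℕ} (h : a = b) (x : Fin a) :
    Fin.cast h.symm (Fin.cast h x) = x := by subst h; rfl

lemma finCastLt {a b : ℕ} (h : a = b) {x y : Fin a} :
    Fin.cast h x < Fin.cast h y ↔ x < y := by subst h; exact Iff.rfl

namespace BlockRev

variable {l : ℕ} {S : Set (Fin l)} {h : Equiv.Perm (Fin l)}

lemma mem_of_apply_mem (hb : BlockRev S h) {p : Fin l} (hp : h p ∈ S) : p ∈ S := by
  by_contra hq
  rw [hb.1 p hq] at hp
  exact hq hp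

lemma symm_mem (hb : BlockRev S h) {p : Fin l} (hp : p ∈ S) : h.symm p ∈ S :=
  hb.mem_of_apply_mem (by rwa [Equiv.apply_symm_apply])

lemma symm_fix (hb : BlockRev S h) {p : Fin l} (hp : p ∉ S) : h.symm p = p := by
  conv_lhs => rw [← hb.1 p hp]
  rw [Equiv.symm_apply_apply]

end BlockRev

namespace Perm'

lemma Le.inv {σ π : Perm'} (h : σ.Le π) : σ.inverse.Le π.inverse := by
  obtain ⟨f, hm, hv⟩ := h
  refine ⟨fun a => π.2 (f (σ.2.symm a)), ?_, ?_⟩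
  · intro a b hab
    exact (hv _ _).mp ((σ.2.apply_symm_apply a).trans_lt (hab.trans_eq (σ.2.apply_symm_apply b).symm))
  · intro a b
    show σ.2.symm a < σ.2.symm b ↔
      π.2.symm (π.2 (f (σ.2.symm a))) < π.2.symm (π.2 (f (σ.2.symm b)))
    rw [Equiv.symm_apply_apply, Equiv.symm_apply_apply]
    exact hm.lt_iff_lt.symm

lemma Le.rev {σ π : Perm'} (h : σ.Le π) : σ.reverse.Le π.reverse := by
  obtain ⟨f, hm, hv⟩ := h
  refine ⟨fun a => (f a.rev).rev, ?_, ?_⟩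
  · intro a b hab
    exact Fin.rev_lt_rev.mpr (hm (Fin.rev_lt_rev.mpr hab))
  · intro a b
    show σ.2 (Fin.revPerm a) < σ.2 (Fin.revPerm b) ↔
      π.2 (Fin.revPerm (f a.rev).rev) < π.2 (Fin.revPerm (f b.rev).rev)
    show σ.2 a.rev < σ.2 b.rev ↔ π.2 (f a.rev).rev.rev < π.2 (f b.rev).rev.rev
    rw [Fin.rev_rev, Fin.rev_rev]
    exact hv a.rev b.rev

lemma Le.compl {σ π : Perm'} (h : σ.Le π) : σ.complement.Le π.complement := by
  obtain ⟨f, hm, hv⟩ := h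
  refine ⟨f, hm, ?_⟩
  intro a b
  show Fin.revPerm (σ.2 a) < Fin.revPerm (σ.2 b) ↔
    Fin.revPerm (π.2 (f a)) < Fin.revPerm (π.2 (f b))
  show (σ.2 a).rev < (σ.2 b).rev ↔ (π.2 (f a)).rev < (π.2 (f b)).rev
  rw [Fin.rev_lt_rev, Fin.rev_lt_rev]
  exact hv b a

lemma inverse_inverse (π : Perm') : π.inverse.inverse = π := rfl

lemma reverse_reverse (π : Perm') : π.reverse.reverse = π := by
  obtain ⟨k, e⟩ := π
  exact congrArg (Sigma.mk k) (Equiv.ext fun a => congrArg e (Fin.rev_rev a))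

lemma complement_complement (π : Perm') : π.complement.complement = π := by
  obtain ⟨k, e⟩ := π
  exact congrArg (Sigma.mk k) (Equiv.ext fun a => Fin.rev_rev (e a))

end Perm'

lemma image_isPermClass {j : Perm' → Perm'} (hinv : ∀ π, j (j π) = π)
    (hmono : ∀ σ π : Perm', σ.Le π → (j σ).Le (j π)) {C : Set Perm'}
    (hC : IsPermClass C) : IsPermClass (j '' C) := by
  rintro π ⟨ρ, hρ, rfl⟩ σ hσ
  have h1 : (j σ).Le ρ := by
    have := hmono _ _ hσ
    rwa [hinv] at this
  exact ⟨j σ, hC ρ hρ _ h1, hinv σ⟩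

lemma image_infinite {j : Perm' → Perm'} (hinv : ∀ π, j (j π) = π) {C : Set Perm'}
    (hC : C.Infinite) : (j '' C).Infinite :=
  hC.image (Function.Involutive.injective hinv).injOn

/-- Every subset of the points of a permutation is order isomorphic to some
permutation. -/
lemma exists_pattern (π : Perm') (S : Set (Fin π.1)) : ∃ τ : Perm', IsPatternOf π S τ := by
  classical
  have hfin : S.Finite := Set.toFinite S
  set T : Finset (Fin π.1) := hfin.toFinset with hT
  set k := T.card with hk
  set g : Fin k ≃o {x // x ∈ T} := T.orderIsoOfFin rfl with hg
  set G : Fin k → Fin π.1 := fun a => (g a : Fin π.1) with hG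
  have hGmono : StrictMono G := fun a b hab => Subtype.coe_lt_coe.mpr (g.strictMono hab)
  have hGinj : Function.Injective G := hGmono.injective
  set V : Finset (Fin π.1) := Finset.image (fun a => π.2 (G a)) Finset.univ with hVdef
  have hV : V.card = k := by
    have hinj2 : Function.Injective fun a => π.2 (G a) :=
      fun a b hab => hGinj (π.2.injective hab)
    rw [hVdef, Finset.card_image_of_injective _ hinj2]
    simp
  set w : Fin k ≃o {x // x ∈ V} := V.orderIsoOfFin hV with hw
  have hmem : ∀ a : Fin k, π.2 (G a) ∈ V := fun a =>
    Finset.mem_image_of_mem _ (Finset.mem_univ a)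
  set e : Fin k → Fin k := fun a => w.symm ⟨π.2 (G a), hmem a⟩ with he
  have hlt : ∀ a b : Fin k, (e a < e b ↔ π.2 (G a) < π.2 (G b)) := by
    intro a b
    rw [he]
    exact (OrderIso.lt_iff_lt w.symm).trans Subtype.mk_lt_mk
  have hinj : Function.Injective e := by
    intro a b hab
    have h1 : (⟨π.2 (G a), hmem a⟩ : {x // x ∈ V}) = ⟨π.2 (G b), hmem b⟩ :=
      w.symm.injective hab
    have h2 : π.2 (G a) = π.2 (G b) := congrArg Subtype.val h1
    exact hGinj (π.2.injective h2)
  have hbij : Function.Bijective e := Finite.injective_iff_bijective.mp hinj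
  refine ⟨⟨k, Equiv.ofBijective e hbij⟩, G, hGmono, ?_, ?_, ?_⟩
  · intro a
    exact (Set.Finite.mem_toFinset hfin).mp (g a).2
  · intro i hi
    exact ⟨g.symm ⟨i, (Set.Finite.mem_toFinset hfin).mpr hi⟩, by simp [hG]⟩
  · intro a b
    exact hlt a b

/-- Pulling back an `N`-gridding along a pattern embedding. -/
lemma pullback_gridding {m' n' : ℕ} {N : Fin m' → Fin n' → Set Perm'}
    (hN : ∀ s t, IsPermClass (N s t) ∨ N s t = ∅)
    {β β' : Perm'} (f : Fin β.1 → Fin β'.1) (hf : StrictMono f)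
    (hv : ∀ a b, (β.2 a < β.2 b ↔ β'.2 (f a) < β'.2 (f b)))
    {κ' : Fin β'.1 → Fin m' × Fin n'} (h : IsMGridding N β' κ') :
    IsMGridding N β (fun i => κ' (f i)) := by
  classical
  constructor
  · constructor
    · intro i i' hii'
      exact h.1.1 _ _ (hf.monotone hii')
    · intro i i' hii'
      rcases eq_or_lt_of_le hii' with heq | hlt
      · rw [β.2.injective heq]
      · exact h.1.2 _ _ ((hv i i').mp hlt).le
  · intro s t
    by_cases hex : ∃ i, κ' (f i) = (s, t)
    · obtain ⟨i₀, hi₀⟩ := hex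
      rcases h.2 s t with hemp | ⟨τ', hτ'N, g', hg'm, hg'mem, hg'surj, hg'v⟩
      · exact absurd hi₀ (hemp (f i₀))
      · obtain ⟨τ₀, g₀, hg₀m, hg₀mem, hg₀surj, hg₀v⟩ :=
          exists_pattern β {i | κ' (f i) = (s, t)}
        have hsel : ∀ a : Fin τ₀.1, ∃ b : Fin τ'.1, g' b = f (g₀ a) := fun a =>
          hg'surj (f (g₀ a)) (hg₀mem a)
        choose E hE using hsel
        have hle : τ₀.Le τ' := by
          refine ⟨E, ?_, ?_⟩
          · intro a b hab
            have h1 : g' (E a) < g' (E b) := by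
              rw [hE, hE]; exact hf (hg₀m hab)
            exact hg'm.lt_iff_lt.mp h1
          · intro a b
            rw [hg₀v a b, hv (g₀ a) (g₀ b), ← hE a, ← hE b]
            exact (hg'v (E a) (E b)).symm
        have hτ₀N : τ₀ ∈ N s t := by
          rcases hN s t with hcl | hemp
          · exact hcl τ' hτ'N τ₀ hle
          · rw [hemp] at hτ'N; exact absurd hτ'N (Set.notMem_empty _)
        exact Or.inr ⟨τ₀, hτ₀N, g₀, hg₀m, hg₀mem, hg₀surj, hg₀v⟩
    · push_neg at hex
      exact Or.inl hex

/-- Reflecting gridded containment through the grid inverse. -/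
lemma reflect_inverse {m n : ℕ} {gα gπ : GriddedPerm m n} {oα oπ : GriddedPerm n m}
    {cα : Fin gα.len → Fin oα.len} {cπ : Fin gπ.len → Fin oπ.len}
    (hsα : SpecInverse gα oα cα) (hsπ : SpecInverse gπ oπ cπ)
    (hle : GriddedLe oα oπ) : GriddedLe gα gπ := by
  obtain ⟨hlα, -, heα, hkα⟩ := hsα
  obtain ⟨hlπ, -, heπ, hkπ⟩ := hsπ
  obtain ⟨f', hf'm, hf'v, hf'k⟩ := hle
  have hval : ∀ p : Fin gα.len,
      (gπ.e (gπ.e.symm (Fin.cast hlπ.symm (f' (Fin.cast hlα (gα.e p))))) : ℕ)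
        = (f' (Fin.cast hlα (gα.e p)) : ℕ) := by
    intro p
    rw [Equiv.apply_symm_apply, Fin.coe_cast]
  have hvalα : ∀ p : Fin gα.len, ((oα.e (Fin.cast hlα (gα.e p))) : ℕ) = (p : ℕ) := by
    intro p
    rw [heα, finCastCast, Equiv.symm_apply_apply]
  have hvalπ : ∀ p : Fin gα.len, ((oπ.e (f' (Fin.cast hlα (gα.e p)))) : ℕ)
      = ((gπ.e.symm (Fin.cast hlπ.symm (f' (Fin.cast hlα (gα.e p))))) : ℕ) := by
    intro p
    rw [heπ]
  refine ⟨fun p => gπ.e.symm (Fin.cast hlπ.symm (f' (Fin.cast hlα (gα.e p)))), ?_, ?_, ?_⟩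
  · intro p q hpq
    have h1 : oα.e (Fin.cast hlα (gα.e p)) < oα.e (Fin.cast hlα (gα.e q)) := by
      rw [Fin.lt_def, hvalα, hvalα]
      exact hpq
    have h2 := (hf'v _ _).mp h1
    rw [Fin.lt_def, hvalπ, hvalπ] at h2
    exact h2
  · intro a b
    have h1 : gα.e a < gα.e b ↔ Fin.cast hlα (gα.e a) < Fin.cast hlα (gα.e b) :=
      (finCastLt hlα).symm
    have h2 := (hf'm.lt_iff_lt
      (a := Fin.cast hlα (gα.e a)) (b := Fin.cast hlα (gα.e b))).symm
    have h3 : f' (Fin.cast hlα (gα.e a)) < f' (Fin.cast hlα (gα.e b)) ↔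
        gπ.e (gπ.e.symm (Fin.cast hlπ.symm (f' (Fin.cast hlα (gα.e a))))) <
        gπ.e (gπ.e.symm (Fin.cast hlπ.symm (f' (Fin.cast hlα (gα.e b))))) := by
      rw [Equiv.apply_symm_apply, Equiv.apply_symm_apply, finCastLt]
    exact (h1.trans h2).trans h3
  · intro p
    have h1 := hkπ (f' (Fin.cast hlα (gα.e p)))
    have h2 := hf'k (Fin.cast hlα (gα.e p))
    have h3 := hkα (Fin.cast hlα (gα.e p))
    rw [finCastCast, Equiv.symm_apply_apply] at h3
    rw [h2, h3] at h1
    exact Prod.ext (congrArg Prod.snd h1).symm (congrArg Prod.fst h1).symm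

/-- Reflecting gridded containment through a column reverse. -/
lemma reflect_colRev {m n : ℕ} (s : Fin m) {gα gπ oα oπ : GriddedPerm m n}
    {cα : Fin gα.len → Fin oα.len} {cπ : Fin gπ.len → Fin oπ.len}
    (hsα : SpecColRev s gα oα cα) (hsπ : SpecColRev s gπ oπ cπ)
    (hle : GriddedLe oα oπ) : GriddedLe gα gπ := by
  obtain ⟨hlα, hα, hbα, -, heα, hkα⟩ := hsα
  obtain ⟨hlπ, hπ, hbπ, -, heπ, hkπ⟩ := hsπ
  obtain ⟨f', hf'm, hf'v, hf'k⟩ := hle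
  have hcell : ∀ p, gπ.κ (hπ (Fin.cast hlπ.symm (f' (Fin.cast hlα (hα.symm p))))) = gα.κ p := by
    intro p
    have h1 := hkπ (f' (Fin.cast hlα (hα.symm p)))
    have h2 := hf'k (Fin.cast hlα (hα.symm p))
    have h3 := hkα (Fin.cast hlα (hα.symm p))
    rw [finCastCast, Equiv.apply_symm_apply] at h3
    rw [h2, h3] at h1
    exact h1.symm
  have hvπ : ∀ p : Fin gα.len, (oπ.e (f' (Fin.cast hlα (hα.symm p))) : ℕ) =
      (gπ.e (hπ (Fin.cast hlπ.symm (f' (Fin.cast hlα (hα.symm p))))) : ℕ) := fun p => heπ _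
  have hvα : ∀ p : Fin gα.len, (oα.e (Fin.cast hlα (hα.symm p)) : ℕ) = (gα.e p : ℕ) := by
    intro p
    rw [heα, finCastCast, Equiv.apply_symm_apply]
  refine ⟨fun p => hπ (Fin.cast hlπ.symm (f' (Fin.cast hlα (hα.symm p)))), ?_, ?_, hcell⟩
  · intro p p' hpp'
    show hπ (Fin.cast hlπ.symm (f' (Fin.cast hlα (hα.symm p)))) <
      hπ (Fin.cast hlπ.symm (f' (Fin.cast hlα (hα.symm p'))))
    by_cases hcols : (gα.κ p).1 = (gα.κ p').1
    · by_cases hs' : (gα.κ p).1 = s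
      · have hpS : p ∈ {q : Fin gα.len | (gα.κ q).1 = s} := hs'
        have hp'S : p' ∈ {q : Fin gα.len | (gα.κ q).1 = s} := by
          show (gα.κ p').1 = s
          rw [← hcols]; exact hs'
        have h1 : hα.symm p' < hα.symm p := by
          have h2 := hbα.2.2 (hα.symm p') (hbα.symm_mem hp'S) (hα.symm p) (hbα.symm_mem hpS)
          rw [Equiv.apply_symm_apply, Equiv.apply_symm_apply] at h2
          exact h2.mpr hpp'
        have h3 : f' (Fin.cast hlα (hα.symm p')) < f' (Fin.cast hlα (hα.symm p)) :=
          hf'm ((finCastLt hlα).mpr h1)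
        have h4 : Fin.cast hlπ.symm (f' (Fin.cast hlα (hα.symm p'))) <
            Fin.cast hlπ.symm (f' (Fin.cast hlα (hα.symm p))) := (finCastLt hlπ.symm).mpr h3
        have hUS : Fin.cast hlπ.symm (f' (Fin.cast hlα (hα.symm p))) ∈
            {q : Fin gπ.len | (gπ.κ q).1 = s} := by
          apply hbπ.mem_of_apply_mem
          show (gπ.κ (hπ (Fin.cast hlπ.symm (f' (Fin.cast hlα (hα.symm p)))))).1 = s
          rw [hcell p]; exact hs'
        have hUS' : Fin.cast hlπ.symm (f' (Fin.cast hlα (hα.symm p'))) ∈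
            {q : Fin gπ.len | (gπ.κ q).1 = s} := by
          apply hbπ.mem_of_apply_mem
          show (gπ.κ (hπ (Fin.cast hlπ.symm (f' (Fin.cast hlα (hα.symm p')))))).1 = s
          rw [hcell p', ← hcols]; exact hs'
        exact (hbπ.2.2 _ hUS' _ hUS).mp h4
      · have hs'' : (gα.κ p').1 ≠ s := by rw [← hcols]; exact hs'
        have hfixp : hα.symm p = p := hbα.symm_fix hs'
        have hfixp' : hα.symm p' = p' := hbα.symm_fix hs''
        rw [hfixp, hfixp']
        have h3 : f' (Fin.cast hlα p) < f' (Fin.cast hlα p') :=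
          hf'm ((finCastLt hlα).mpr hpp')
        have hc2 : gπ.κ (hπ (Fin.cast hlπ.symm (f' (Fin.cast hlα p)))) = gα.κ p := by
          have := hcell p; rwa [hfixp] at this
        have hc2' : gπ.κ (hπ (Fin.cast hlπ.symm (f' (Fin.cast hlα p')))) = gα.κ p' := by
          have := hcell p'; rwa [hfixp'] at this
        have hU : Fin.cast hlπ.symm (f' (Fin.cast hlα p)) ∉
            {q : Fin gπ.len | (gπ.κ q).1 = s} := by
          intro hc
          have hmem := hbπ.2.1 _ hc
          rw [Set.mem_setOf_eq, hc2] at hmem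
          exact hs' hmem
        have hU' : Fin.cast hlπ.symm (f' (Fin.cast hlα p')) ∉
            {q : Fin gπ.len | (gπ.κ q).1 = s} := by
          intro hc
          have hmem := hbπ.2.1 _ hc
          rw [Set.mem_setOf_eq, hc2'] at hmem
          exact hs'' hmem
        rw [hbπ.1 _ hU, hbπ.1 _ hU']
        exact (finCastLt hlπ.symm).mpr h3
    · have hltc : (gα.κ p).1 < (gα.κ p').1 :=
        lt_of_le_of_ne (gα.col_mono p p' hpp'.le) hcols
      by_contra hnot
      push_neg at hnot
      have h6 := gπ.col_mono _ _ hnot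
      rw [hcell p, hcell p'] at h6
      exact absurd h6 (not_le.mpr hltc)
  · intro a b
    have h0 := hf'v (Fin.cast hlα (hα.symm a)) (Fin.cast hlα (hα.symm b))
    simp only [Fin.lt_def] at h0 ⊢
    rw [hvα a, hvα b, hvπ a, hvπ b] at h0
    exact h0

/-- Reflecting gridded containment through a row complement. -/
lemma reflect_rowCompl {m n : ℕ} (t : Fin n) {gα gπ oα oπ : GriddedPerm m n}
    {cα : Fin gα.len → Fin oα.len} {cπ : Fin gπ.len → Fin oπ.len}
    (hsα : SpecRowCompl t gα oα cα) (hsπ : SpecRowCompl t gπ oπ cπ)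
    (hle : GriddedLe oα oπ) : GriddedLe gα gπ := by
  obtain ⟨hlα, hα, hbα, -, heα, hkα⟩ := hsα
  obtain ⟨hlπ, hπ, hbπ, -, heπ, hkπ⟩ := hsπ
  obtain ⟨f', hf'm, hf'v, hf'k⟩ := hle
  have hcell : ∀ p, gπ.κ (Fin.cast hlπ.symm (f' (Fin.cast hlα p))) = gα.κ p := by
    intro p
    have h1 := hkπ (f' (Fin.cast hlα p))
    have h2 := hf'k (Fin.cast hlα p)
    have h3 := hkα (Fin.cast hlα p)
    rw [finCastCast] at h3
    rw [h2, h3] at h1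
    exact h1.symm
  have hvπ : ∀ p : Fin gα.len, (oπ.e (f' (Fin.cast hlα p)) : ℕ) =
      (hπ (gπ.e (Fin.cast hlπ.symm (f' (Fin.cast hlα p)))) : ℕ) := fun p => heπ _
  have hvα : ∀ p : Fin gα.len, (oα.e (Fin.cast hlα p) : ℕ) = (hα (gα.e p) : ℕ) := by
    intro p
    rw [heα, finCastCast]
  have hGiff : ∀ a b : Fin gα.len,
      (hα (gα.e a) < hα (gα.e b) ↔
        hπ (gπ.e (Fin.cast hlπ.symm (f' (Fin.cast hlα a)))) <
        hπ (gπ.e (Fin.cast hlπ.symm (f' (Fin.cast hlα b))))) := by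
    intro a b
    have h0 := hf'v (Fin.cast hlα a) (Fin.cast hlα b)
    simp only [Fin.lt_def] at h0 ⊢
    rw [hvα a, hvα b, hvπ a, hvπ b] at h0
    exact h0
  refine ⟨fun p => Fin.cast hlπ.symm (f' (Fin.cast hlα p)), ?_, ?_, hcell⟩
  · intro p p' hpp'
    exact (finCastLt hlπ.symm).mpr (hf'm ((finCastLt hlα).mpr hpp'))
  · intro a b
    show gα.e a < gα.e b ↔ gπ.e (Fin.cast hlπ.symm (f' (Fin.cast hlα a))) <
      gπ.e (Fin.cast hlπ.symm (f' (Fin.cast hlα b)))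
    by_cases hrows : (gα.κ a).2 = (gα.κ b).2
    · by_cases ht' : (gα.κ a).2 = t
      · have hmemA : gα.e a ∈ {v : Fin gα.len | (gα.κ (gα.e.symm v)).2 = t} := by
          rw [Set.mem_setOf_eq, Equiv.symm_apply_apply]; exact ht'
        have hmemB : gα.e b ∈ {v : Fin gα.len | (gα.κ (gα.e.symm v)).2 = t} := by
          rw [Set.mem_setOf_eq, Equiv.symm_apply_apply, ← hrows]; exact ht'
        have hrevα := hbα.2.2 (gα.e a) hmemA (gα.e b) hmemB
        have hmemA' : gπ.e (Fin.cast hlπ.symm (f' (Fin.cast hlα a))) ∈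
            {v : Fin gπ.len | (gπ.κ (gπ.e.symm v)).2 = t} := by
          rw [Set.mem_setOf_eq, Equiv.symm_apply_apply, hcell a]; exact ht'
        have hmemB' : gπ.e (Fin.cast hlπ.symm (f' (Fin.cast hlα b))) ∈
            {v : Fin gπ.len | (gπ.κ (gπ.e.symm v)).2 = t} := by
          rw [Set.mem_setOf_eq, Equiv.symm_apply_apply, hcell b, ← hrows]; exact ht'
        have hrevπ := hbπ.2.2 _ hmemA' _ hmemB'
        rw [hrevα, hrevπ]
        exact hGiff b a
      · have ht'' : (gα.κ b).2 ≠ t := by rw [← hrows]; exact ht'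
        have hfa : hα (gα.e a) = gα.e a := hbα.1 _ (fun hc => ht'
          (by rwa [Set.mem_setOf_eq, Equiv.symm_apply_apply] at hc))
        have hfb : hα (gα.e b) = gα.e b := hbα.1 _ (fun hc => ht''
          (by rwa [Set.mem_setOf_eq, Equiv.symm_apply_apply] at hc))
        have hfa' : hπ (gπ.e (Fin.cast hlπ.symm (f' (Fin.cast hlα a)))) =
            gπ.e (Fin.cast hlπ.symm (f' (Fin.cast hlα a))) := hbπ.1 _ (fun hc => ht'
          (by rwa [Set.mem_setOf_eq, Equiv.symm_apply_apply, hcell a] at hc))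
        have hfb' : hπ (gπ.e (Fin.cast hlπ.symm (f' (Fin.cast hlα b)))) =
            gπ.e (Fin.cast hlπ.symm (f' (Fin.cast hlα b))) := hbπ.1 _ (fun hc => ht''
          (by rwa [Set.mem_setOf_eq, Equiv.symm_apply_apply, hcell b] at hc))
        have h0 := hGiff a b
        rw [hfa, hfb, hfa', hfb'] at h0
        exact h0
    · have hne : a ≠ b := fun hab => hrows (by rw [hab])
      have claim1 : gα.e a < gα.e b ↔ (gα.κ a).2 < (gα.κ b).2 := by
        constructor
        · intro hl'
          exact lt_of_le_of_ne (gα.row_mono a b hl'.le) hrows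
        · intro hl'
          rcases lt_trichotomy (gα.e a) (gα.e b) with h | h | h
          · exact h
          · exact absurd (gα.e.injective h) hne
          · exact absurd (gα.row_mono b a h.le) (not_le.mpr hl')
      have hneπ : Fin.cast hlπ.symm (f' (Fin.cast hlα a)) ≠
          Fin.cast hlπ.symm (f' (Fin.cast hlα b)) := fun hab =>
        hrows (by rw [← hcell a, hab, hcell b])
      have hrowsπ : (gπ.κ (Fin.cast hlπ.symm (f' (Fin.cast hlα a)))).2 ≠
          (gπ.κ (Fin.cast hlπ.symm (f' (Fin.cast hlα b)))).2 := by
        rw [hcell a, hcell b]; exact hrows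
      have claim2 : gπ.e (Fin.cast hlπ.symm (f' (Fin.cast hlα a))) <
          gπ.e (Fin.cast hlπ.symm (f' (Fin.cast hlα b))) ↔ (gα.κ a).2 < (gα.κ b).2 := by
        constructor
        · intro hl'
          have h7 := gπ.row_mono _ _ hl'.le
          rw [hcell a, hcell b] at h7
          exact lt_of_le_of_ne h7 hrows
        · intro hl'
          rcases lt_trichotomy (gπ.e (Fin.cast hlπ.symm (f' (Fin.cast hlα a))))
            (gπ.e (Fin.cast hlπ.symm (f' (Fin.cast hlα b)))) with h | h | h
          · exact h
          · exact absurd (gπ.e.injective h) hneπ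
          · have h7 := gπ.row_mono _ _ h.le
            rw [hcell a, hcell b] at h7
            exact absurd h7 (not_le.mpr hl')
      exact claim1.trans claim2.symm

/-- Reflecting gridded containment through a column permutation. -/
lemma reflect_colPerm {m n : ℕ} (μ : Equiv.Perm (Fin m)) {gα gπ oα oπ : GriddedPerm m n}
    {cα : Fin gα.len → Fin oα.len} {cπ : Fin gπ.len → Fin oπ.len}
    (hsα : SpecColPerm μ gα oα cα) (hsπ : SpecColPerm μ gπ oπ cπ)
    (hle : GriddedLe oα oπ) : GriddedLe gα gπ := by
  obtain ⟨hlα, hα, hchα, -, heα, hkα⟩ := hsα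
  obtain ⟨hlπ, hπ, hchπ, -, heπ, hkπ⟩ := hsπ
  obtain ⟨f', hf'm, hf'v, hf'k⟩ := hle
  have hcell : ∀ p, gπ.κ (hπ (Fin.cast hlπ.symm (f' (Fin.cast hlα (hα.symm p))))) = gα.κ p := by
    intro p
    have h1 := hkπ (f' (Fin.cast hlα (hα.symm p)))
    have h2 := hf'k (Fin.cast hlα (hα.symm p))
    have h3 := hkα (Fin.cast hlα (hα.symm p))
    rw [finCastCast, Equiv.apply_symm_apply] at h3
    rw [h2, h3] at h1
    exact Prod.ext (μ.symm.injective (congrArg Prod.fst h1)).symm (congrArg Prod.snd h1).symm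
  have hvπ : ∀ p : Fin gα.len, (oπ.e (f' (Fin.cast hlα (hα.symm p))) : ℕ) =
      (gπ.e (hπ (Fin.cast hlπ.symm (f' (Fin.cast hlα (hα.symm p))))) : ℕ) := fun p => heπ _
  have hvα : ∀ p : Fin gα.len, (oα.e (Fin.cast hlα (hα.symm p)) : ℕ) = (gα.e p : ℕ) := by
    intro p
    rw [heα, finCastCast, Equiv.apply_symm_apply]
  refine ⟨fun p => hπ (Fin.cast hlπ.symm (f' (Fin.cast hlα (hα.symm p)))), ?_, ?_, hcell⟩
  · intro p p' hpp'
    show hπ (Fin.cast hlπ.symm (f' (Fin.cast hlα (hα.symm p)))) <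
      hπ (Fin.cast hlπ.symm (f' (Fin.cast hlα (hα.symm p'))))
    by_cases hcols : (gα.κ p).1 = (gα.κ p').1
    · have h1 : hα.symm p < hα.symm p' := by
        refine (hchα _ _).mpr (Or.inr ?_)
        rw [Equiv.apply_symm_apply, Equiv.apply_symm_apply]
        exact ⟨hcols, hpp'⟩
      have h4 : Fin.cast hlπ.symm (f' (Fin.cast hlα (hα.symm p))) <
          Fin.cast hlπ.symm (f' (Fin.cast hlα (hα.symm p'))) :=
        (finCastLt hlπ.symm).mpr (hf'm ((finCastLt hlα).mpr h1))
      have h5 := (hchπ _ _).mp h4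
      rcases h5 with h5 | h5
      · exfalso
        rw [hcell p, hcell p', hcols] at h5
        exact lt_irrefl _ h5
      · exact h5.2
    · have hltc : (gα.κ p).1 < (gα.κ p').1 :=
        lt_of_le_of_ne (gα.col_mono p p' hpp'.le) hcols
      by_contra hnot
      push_neg at hnot
      have h6 := gπ.col_mono _ _ hnot
      rw [hcell p, hcell p'] at h6
      exact absurd h6 (not_le.mpr hltc)
  · intro a b
    have h0 := hf'v (Fin.cast hlα (hα.symm a)) (Fin.cast hlα (hα.symm b))
    simp only [Fin.lt_def] at h0 ⊢
    rw [hvα a, hvα b, hvπ a, hvπ b] at h0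
    exact h0

/-- Reflecting gridded containment through a row permutation. -/
lemma reflect_rowPerm {m n : ℕ} (ν : Equiv.Perm (Fin n)) {gα gπ oα oπ : GriddedPerm m n}
    {cα : Fin gα.len → Fin oα.len} {cπ : Fin gπ.len → Fin oπ.len}
    (hsα : SpecRowPerm ν gα oα cα) (hsπ : SpecRowPerm ν gπ oπ cπ)
    (hle : GriddedLe oα oπ) : GriddedLe gα gπ := by
  obtain ⟨hlα, hα, hchα, -, heα, hkα⟩ := hsα
  obtain ⟨hlπ, hπ, hchπ, -, heπ, hkπ⟩ := hsπ
  obtain ⟨f', hf'm, hf'v, hf'k⟩ := hle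
  have hcell : ∀ p, gπ.κ (Fin.cast hlπ.symm (f' (Fin.cast hlα p))) = gα.κ p := by
    intro p
    have h1 := hkπ (f' (Fin.cast hlα p))
    have h2 := hf'k (Fin.cast hlα p)
    have h3 := hkα (Fin.cast hlα p)
    rw [finCastCast] at h3
    rw [h2, h3] at h1
    exact Prod.ext (congrArg Prod.fst h1).symm (ν.symm.injective (congrArg Prod.snd h1)).symm
  have hvπ : ∀ p : Fin gα.len, (oπ.e (f' (Fin.cast hlα p)) : ℕ) =
      (hπ (gπ.e (Fin.cast hlπ.symm (f' (Fin.cast hlα p)))) : ℕ) := fun p => heπ _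
  have hvα : ∀ p : Fin gα.len, (oα.e (Fin.cast hlα p) : ℕ) = (hα (gα.e p) : ℕ) := by
    intro p
    rw [heα, finCastCast]
  have hGiff : ∀ a b : Fin gα.len,
      (hα (gα.e a) < hα (gα.e b) ↔
        hπ (gπ.e (Fin.cast hlπ.symm (f' (Fin.cast hlα a)))) <
        hπ (gπ.e (Fin.cast hlπ.symm (f' (Fin.cast hlα b))))) := by
    intro a b
    have h0 := hf'v (Fin.cast hlα a) (Fin.cast hlα b)
    simp only [Fin.lt_def] at h0 ⊢
    rw [hvα a, hvα b, hvπ a, hvπ b] at h0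
    exact h0
  refine ⟨fun p => Fin.cast hlπ.symm (f' (Fin.cast hlα p)), ?_, ?_, hcell⟩
  · intro p p' hpp'
    exact (finCastLt hlπ.symm).mpr (hf'm ((finCastLt hlα).mpr hpp'))
  · intro a b
    show gα.e a < gα.e b ↔ gπ.e (Fin.cast hlπ.symm (f' (Fin.cast hlα a))) <
      gπ.e (Fin.cast hlπ.symm (f' (Fin.cast hlα b)))
    by_cases hrows : (gα.κ a).2 = (gα.κ b).2
    · have hchar_a : hα (gα.e a) < hα (gα.e b) ↔ gα.e a < gα.e b := by
        rw [hchα (gα.e a) (gα.e b)]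
        simp only [Equiv.symm_apply_apply]
        constructor
        · rintro (h | h)
          · rw [hrows] at h; exact absurd h (lt_irrefl _)
          · exact h.2
        · intro h
          exact Or.inr ⟨hrows, h⟩
      have hchar_π : hπ (gπ.e (Fin.cast hlπ.symm (f' (Fin.cast hlα a)))) <
          hπ (gπ.e (Fin.cast hlπ.symm (f' (Fin.cast hlα b)))) ↔
          gπ.e (Fin.cast hlπ.symm (f' (Fin.cast hlα a))) <
          gπ.e (Fin.cast hlπ.symm (f' (Fin.cast hlα b))) := by
        rw [hchπ _ _]
        simp only [Equiv.symm_apply_apply]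
        rw [hcell a, hcell b]
        constructor
        · rintro (h | h)
          · rw [hrows] at h; exact absurd h (lt_irrefl _)
          · exact h.2
        · intro h
          exact Or.inr ⟨hrows, h⟩
      exact (hchar_a.symm.trans (hGiff a b)).trans hchar_π
    · have hne : a ≠ b := fun hab => hrows (by rw [hab])
      have claim1 : gα.e a < gα.e b ↔ (gα.κ a).2 < (gα.κ b).2 := by
        constructor
        · intro hl'
          exact lt_of_le_of_ne (gα.row_mono a b hl'.le) hrows
        · intro hl'
          rcases lt_trichotomy (gα.e a) (gα.e b) with h | h | h
          · exact h
          · exact absurd (gα.e.injective h) hne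
          · exact absurd (gα.row_mono b a h.le) (not_le.mpr hl')
      have hneπ : Fin.cast hlπ.symm (f' (Fin.cast hlα a)) ≠
          Fin.cast hlπ.symm (f' (Fin.cast hlα b)) := fun hab =>
        hrows (by rw [← hcell a, hab, hcell b])
      have claim2 : gπ.e (Fin.cast hlπ.symm (f' (Fin.cast hlα a))) <
          gπ.e (Fin.cast hlπ.symm (f' (Fin.cast hlα b))) ↔ (gα.κ a).2 < (gα.κ b).2 := by
        constructor
        · intro hl'
          have h7 := gπ.row_mono _ _ hl'.le
          rw [hcell a, hcell b] at h7
          exact lt_of_le_of_ne h7 hrows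
        · intro hl'
          rcases lt_trichotomy (gπ.e (Fin.cast hlπ.symm (f' (Fin.cast hlα a))))
            (gπ.e (Fin.cast hlπ.symm (f' (Fin.cast hlα b)))) with h | h | h
          · exact h
          · exact absurd (gπ.e.injective h) hneπ
          · have h7 := gπ.row_mono _ _ h.le
            rw [hcell a, hcell b] at h7
            exact absurd h7 (not_le.mpr hl')
      exact claim1.trans claim2.symm

/-- Grid mappings reflect gridded containment. -/
lemma reflect_gridMapping {m n m' n' : ℕ} {F : GMap m n m' n'} (hF : IsGridMapping F) :
    ∀ gα gπ : GriddedPerm m n, GriddedLe (F.onGrid gα) (F.onGrid gπ) → GriddedLe gα gπ := by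
  induction hF with
  | inverse F hM hG => exact fun gα gπ h => reflect_inverse (hG gα) (hG gπ) h
  | colRev s F hM hG => exact fun gα gπ h => reflect_colRev s (hG gα) (hG gπ) h
  | rowCompl t F hM hG => exact fun gα gπ h => reflect_rowCompl t (hG gα) (hG gπ) h
  | colPerm μ F hM hG => exact fun gα gπ h => reflect_colPerm μ (hG gα) (hG gπ) h
  | rowPerm ν F hM hG => exact fun gα gπ h => reflect_rowPerm ν (hG gα) (hG gπ) h
  | comp F G hFm hGm ihF ihG => exact fun gα gπ h => ihF _ _ (ihG _ _ h)

/-- Grid mappings preserve being a gridding matrix. -/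
lemma onMat_griddingMatrix {m n m' n' : ℕ} {F : GMap m n m' n'} (hF : IsGridMapping F) :
    ∀ M : Fin m → Fin n → Set Perm', IsGriddingMatrix M → IsGriddingMatrix (F.onMat M) := by
  induction hF with
  | inverse F hM hG =>
      intro M hMat i j
      rw [hM]
      rcases hMat j i with ⟨hc, hi⟩ | he
      · exact Or.inl ⟨image_isPermClass Perm'.inverse_inverse (fun _ _ => Perm'.Le.inv) hc,
          image_infinite Perm'.inverse_inverse hi⟩
      · right
        show Perm'.inverse '' M j i = ∅
        rw [he, Set.image_empty]
  | colRev s F hM hG =>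
      intro M hMat i j
      rw [hM]
      show (IsPermClass (matColRev s M i j) ∧ (matColRev s M i j).Infinite) ∨
        matColRev s M i j = ∅
      unfold matColRev
      split_ifs with h
      · rcases hMat i j with ⟨hc, hi⟩ | he
        · exact Or.inl ⟨image_isPermClass Perm'.reverse_reverse (fun _ _ => Perm'.Le.rev) hc,
            image_infinite Perm'.reverse_reverse hi⟩
        · right; rw [he, Set.image_empty]
      · exact hMat i j
  | rowCompl t F hM hG =>
      intro M hMat i j
      rw [hM]
      show (IsPermClass (matRowCompl t M i j) ∧ (matRowCompl t M i j).Infinite) ∨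
        matRowCompl t M i j = ∅
      unfold matRowCompl
      split_ifs with h
      · rcases hMat i j with ⟨hc, hi⟩ | he
        · exact Or.inl ⟨image_isPermClass Perm'.complement_complement
            (fun _ _ => Perm'.Le.compl) hc,
            image_infinite Perm'.complement_complement hi⟩
        · right; rw [he, Set.image_empty]
      · exact hMat i j
  | colPerm μ F hM hG =>
      intro M hMat i j
      rw [hM]
      exact hMat (μ i) j
  | rowPerm ν F hM hG =>
      intro M hMat i j
      rw [hM]
      exact hMat i (ν j)
  | comp F G hFm hGm ihF ihG =>
      intro M hMat
      exact ihG (F.onMat M) (ihF M hMat)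
/-- **Theorem.**  Let `M` be a gridding matrix, and let `A` be an antichain for
which infinitely many elements are strongly uniquely `M`-griddable.  Then the
grid class of any gridding matrix `N` that is equivalent to `M` under some
grid mapping is not partially well-ordered. -/
theorem not_pwo_of_strongly_unique_antichain {m n : ℕ}
    (M : Fin m → Fin n → Set Perm') (hM : IsGriddingMatrix M)
    (A : Set Perm') (hA : IsPermAntichain A)
    (hinf : {α ∈ A | StronglyUniquelyGriddable M α}.Infinite)
    {m' n' : ℕ} (N : Fin m' → Fin n' → Set Perm')
    (hN : ∃ F : GMap m n m' n', IsGridMapping F ∧ F.onMat M = N) :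
    ¬ IsPwo (GridClass N) := by
  intro hpwo
  obtain ⟨F, hF, hFM⟩ := hN
  have hNgm : IsGriddingMatrix N := by
    rw [← hFM]
    exact onMat_griddingMatrix hF M hM
  have hNcl : ∀ s t, IsPermClass (N s t) ∨ N s t = ∅ := by
    intro s t
    rcases hNgm s t with ⟨h1, _⟩ | h2
    exacts [Or.inl h1, Or.inr h2]
  classical
  let E := hinf.natEmbedding
  have hmem : ∀ i : ℕ, ((E i : Perm') ∈ A ∧ StronglyUniquelyGriddable M (E i)) :=
    fun i => (E i).2
  have hsugs : ∀ i : ℕ, ∃ g : GriddedPerm m n, g.toPerm = (E i : Perm') ∧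
      UniqueMGridding M g.toPerm g.κ ∧
      ∀ (m'' n'' : ℕ) (G : GMap m n m'' n''), IsGridMapping G →
        UniqueMGridding (G.onMat M) (G.onGrid g).toPerm (G.onGrid g).κ :=
    fun i => (hmem i).2
  choose gr hgr hun hsug using hsugs
  refine hpwo ⟨fun i => (F.onGrid (gr i)).toPerm, ?_, ?_⟩
  · intro i
    have h1 := hsug i m' n' F hF
    rw [hFM] at h1
    exact ⟨(F.onGrid (gr i)).κ, h1.1⟩
  · intro i j hij hle
    have hunj := hsug j m' n' F hF
    have huni := hsug i m' n' F hF
    rw [hFM] at hunj huni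
    obtain ⟨f, hfm, hfv⟩ := hle
    have hpull : IsMGridding N (F.onGrid (gr i)).toPerm
        (fun a => (F.onGrid (gr j)).κ (f a)) :=
      pullback_gridding hNcl f hfm hfv hunj.1
    have hkapeq := huni.2 _ hpull
    have hgl : GriddedLe (F.onGrid (gr i)) (F.onGrid (gr j)) :=
      ⟨f, hfm, hfv, fun a => congrFun hkapeq a⟩
    obtain ⟨f0, hf0m, hf0v, -⟩ := reflect_gridMapping hF _ _ hgl
    have hlea : ((E i : Perm')).Le (E j) := by
      rw [← hgr i, ← hgr j]
      exact ⟨f0, hf0m, hf0v⟩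
    have hEne : (E i : Perm') ≠ (E j : Perm') := fun hc => hij (E.injective (Subtype.ext hc))
    exact hA _ (hmem i).1 _ (hmem j).1 hEne hlea
end Aux
end

section
/- In any grid pin sequence p_1, p_2, …, for every i > 1 the pin p_{i+1} has neither the same direction as p_i nor the direction opposite to that of p_i. -/
/-! Grid pin sequences in a gridded plane.  The gridded plane is described by
the set `V` of vertical grid line coordinates and the set `H` of horizontal
grid line coordinates. -/

/-- `q` separates `a` from `b` by position. -/
def SepX (q a b : ℝ × ℝ) : Prop := min a.1 b.1 < q.1 ∧ q.1 < max a.1 b.1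

/-- `q` separates `a` from `b` by value. -/
def SepY (q a b : ℝ × ℝ) : Prop := min a.2 b.2 < q.2 ∧ q.2 < max a.2 b.2

/-- `q` lies in `rect(a,b)`. -/
def InRect (q a b : ℝ × ℝ) : Prop :=
  min a.1 b.1 ≤ q.1 ∧ q.1 ≤ max a.1 b.1 ∧ min a.2 b.2 ≤ q.2 ∧ q.2 ≤ max a.2 b.2

/-- No grid line of `S` lies strictly between `x` and `y`. -/
def NoLineBetween (S : Set ℝ) (x y : ℝ) : Prop := ∀ v ∈ S, ¬ (min x y < v ∧ v < max x y)

/-- Two horizontal coordinates lie in the same column of the grid. -/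
def SameCol (V : Set ℝ) (x y : ℝ) : Prop := ∀ v ∈ V, (v < x ↔ v < y)

/-- Two vertical coordinates lie in the same row of the grid. -/
def SameRow (H : Set ℝ) (x y : ℝ) : Prop := ∀ h ∈ H, (h < x ↔ h < y)

/-- `q` is a left pin with respect to `rect(a,b)`. -/
def IsLeftP (a b q : ℝ × ℝ) : Prop := q.1 < min a.1 b.1 ∧ SepY q a b

/-- `q` is a right pin with respect to `rect(a,b)`. -/
def IsRightP (a b q : ℝ × ℝ) : Prop := max a.1 b.1 < q.1 ∧ SepY q a b

/-- `q` is an up pin with respect to `rect(a,b)`. -/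
def IsUpP (a b q : ℝ × ℝ) : Prop := max a.2 b.2 < q.2 ∧ SepX q a b

/-- `q` is a down pin with respect to `rect(a,b)`. -/
def IsDownP (a b q : ℝ × ℝ) : Prop := q.2 < min a.2 b.2 ∧ SepX q a b

/-- Row-column agreement of `q` as a pin for the pair `(a, b)`: an up or down
pin lies in the same column of the grid as `b`, a left or right pin in the same
row as `b`. -/
def RCAgree (V H : Set ℝ) (a b q : ℝ × ℝ) : Prop :=
  ((IsUpP a b q ∨ IsDownP a b q) → SameCol V q.1 b.1) ∧
  ((IsLeftP a b q ∨ IsRightP a b q) → SameRow H q.2 b.2)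

/-- The conditions making `p 1, …, p N` a grid pin sequence with fictive pin
`p 0`: genericity of the points, adjacency of `p 1` to the origin, and for
each later pin local separation, local externality, row-column agreement and
non-interaction (it could not have been used as a grid pin earlier). -/
def PinConds (V H : Set ℝ) (p : ℕ → ℝ × ℝ) (N : ℕ) : Prop :=
  (∀ i, 1 ≤ i → i ≤ N → (p i).1 ∉ V ∧ (p i).2 ∉ H) ∧
  (∀ i j, 1 ≤ i → i ≤ N → 1 ≤ j → j ≤ N → i ≠ j →
    (p i).1 ≠ (p j).1 ∧ (p i).2 ≠ (p j).2) ∧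
  (∀ i, 1 ≤ i → i ≤ N → (p i).1 ≠ (p 0).1 ∧ (p i).2 ≠ (p 0).2) ∧
  (1 ≤ N → NoLineBetween V (p 0).1 (p 1).1 ∧ NoLineBetween H (p 0).2 (p 1).2) ∧
  (∀ i, 1 ≤ i → i + 1 ≤ N →
    (SepX (p (i+1)) (p (i-1)) (p i) ∨ SepY (p (i+1)) (p (i-1)) (p i)) ∧
    (∀ j, 1 ≤ j → j ≤ i → ¬ InRect (p (i+1)) (p (j-1)) (p j)) ∧
    RCAgree V H (p (i-1)) (p i) (p (i+1)) ∧
    (∀ j, 1 ≤ j → j < i →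
      ¬ ((SepX (p (i+1)) (p (j-1)) (p j) ∨ SepY (p (i+1)) (p (j-1)) (p j)) ∧
         RCAgree V H (p (j-1)) (p j) (p (i+1)) ∧
         (∀ j', 1 ≤ j' → j' ≤ j → ¬ InRect (p (i+1)) (p (j'-1)) (p j')))))

/-- `p 1, …, p N` is a grid pin sequence: the fictive pin `p 0` lies at the
intersection of two perpendicular grid lines and the pin conditions hold. -/
def IsGridPinSeq (V H : Set ℝ) (p : ℕ → ℝ × ℝ) (N : ℕ) : Prop :=
  (p 0).1 ∈ V ∧ (p 0).2 ∈ H ∧ PinConds V H p N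

/-- The `j`-th pin of the sequence is a left pin (`p 1` has the two directions
given by its position relative to `p 0`). -/
def PinLeft (p : ℕ → ℝ × ℝ) (j : ℕ) : Prop :=
  (j = 1 ∧ (p 1).1 < (p 0).1) ∨ (2 ≤ j ∧ IsLeftP (p (j-2)) (p (j-1)) (p j))

/-- The `j`-th pin of the sequence is a right pin. -/
def PinRight (p : ℕ → ℝ × ℝ) (j : ℕ) : Prop :=
  (j = 1 ∧ (p 0).1 < (p 1).1) ∨ (2 ≤ j ∧ IsRightP (p (j-2)) (p (j-1)) (p j))

/-- The `j`-th pin of the sequence is an up pin. -/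
def PinUp (p : ℕ → ℝ × ℝ) (j : ℕ) : Prop :=
  (j = 1 ∧ (p 0).2 < (p 1).2) ∨ (2 ≤ j ∧ IsUpP (p (j-2)) (p (j-1)) (p j))

/-- The `j`-th pin of the sequence is a down pin. -/
def PinDown (p : ℕ → ℝ × ℝ) (j : ℕ) : Prop :=
  (j = 1 ∧ (p 1).2 < (p 0).2) ∨ (2 ≤ j ∧ IsDownP (p (j-2)) (p (j-1)) (p j))

theorem key_h (V H : Set ℝ) (p : ℕ → ℝ × ℝ) (N : ℕ) (hp : IsGridPinSeq V H p N)
    (i : ℕ) (hi : 1 < i) (hiN : i + 1 ≤ N)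
    (h1 : IsLeftP (p (i-1)) (p i) (p (i+1)) ∨ IsRightP (p (i-1)) (p i) (p (i+1)))
    (h2 : IsLeftP (p (i-2)) (p (i-1)) (p i) ∨ IsRightP (p (i-2)) (p (i-1)) (p i)) :
    False := by
  obtain ⟨h0V, h0H, hgen, hdist, hdist0, hadj, hstep⟩ := hp
  have e1 : i - 1 + 1 = i := by omega
  have e2 : i - 1 - 1 = i - 2 := by omega
  have sY2 : SepY (p i) (p (i-2)) (p (i-1)) := h2.elim And.right And.right
  have sY1 : SepY (p (i+1)) (p (i-1)) (p i) := h1.elim And.right And.right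
  have sYD : SepY (p (i+1)) (p (i-2)) (p (i-1)) :=
    ⟨lt_of_le_of_lt (le_min (min_le_right _ _) sY2.1.le) sY1.1,
     lt_of_lt_of_le sY1.2 (max_le (le_max_right _ _) sY2.2.le)⟩
  obtain ⟨sepI, extI, rcI, nonI⟩ := hstep i (by omega) hiN
  obtain ⟨sepI1, extI1, rcI1, nonI1⟩ := hstep (i-1) (by omega) (by omega)
  rw [e1, e2] at rcI1
  have rowDC : SameRow H (p (i+1)).2 (p i).2 := rcI.2 h1
  have rowCB : SameRow H (p i).2 (p (i-1)).2 := rcI1.2 h2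
  have rowDB : SameRow H (p (i+1)).2 (p (i-1)).2 :=
    fun h hh => (rowDC h hh).trans (rowCB h hh)
  have hx1 : (p (i+1)).1 ≠ (p (i-1)).1 :=
    (hdist (i+1) (i-1) (by omega) hiN (by omega) (by omega) (by omega)).1
  have hx2 : (p (i+1)).1 ≠ (p (i-2)).1 := by
    rcases eq_or_lt_of_le (show 2 ≤ i from hi) with h | h
    · have h0 : i - 2 = 0 := by omega
      rw [h0]
      exact (hdist0 (i+1) (by omega) hiN).1
    · exact (hdist (i+1) (i-2) (by omega) hiN (by omega) (by omega) (by omega)).1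
  have hni := nonI (i-1) (by omega) (by omega)
  rw [e2] at hni
  have hext := extI (i-1) (by omega) (by omega)
  rw [e2] at hext
  have main : ¬ SepX (p (i+1)) (p (i-2)) (p (i-1)) → False := fun hnsx =>
    hni ⟨Or.inr sYD,
      ⟨fun hud => absurd (hud.elim And.right And.right) hnsx, fun _ => rowDB⟩,
      fun j' hj1 hj2 => extI j' hj1 (by omega)⟩
  rcases lt_trichotomy (p (i+1)).1 (min (p (i-2)).1 (p (i-1)).1) with hlt | heq | hgt
  · exact main fun hsx => absurd hsx.1 (not_lt.2 hlt.le)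
  · rcases min_cases (p (i-2)).1 (p (i-1)).1 with ⟨h, _⟩ | ⟨h, _⟩
    · exact hx2 (heq.trans h)
    · exact hx1 (heq.trans h)
  · rcases lt_trichotomy (p (i+1)).1 (max (p (i-2)).1 (p (i-1)).1) with hlt2 | heq2 | hgt2
    · exact hext ⟨hgt.le, hlt2.le, sYD.1.le, sYD.2.le⟩
    · rcases max_cases (p (i-2)).1 (p (i-1)).1 with ⟨h, _⟩ | ⟨h, _⟩
      · exact hx2 (heq2.trans h)
      · exact hx1 (heq2.trans h)
    · exact main fun hsx => absurd hsx.2 (not_lt.2 hgt2.le)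

theorem key_v (V H : Set ℝ) (p : ℕ → ℝ × ℝ) (N : ℕ) (hp : IsGridPinSeq V H p N)
    (i : ℕ) (hi : 1 < i) (hiN : i + 1 ≤ N)
    (h1 : IsUpP (p (i-1)) (p i) (p (i+1)) ∨ IsDownP (p (i-1)) (p i) (p (i+1)))
    (h2 : IsUpP (p (i-2)) (p (i-1)) (p i) ∨ IsDownP (p (i-2)) (p (i-1)) (p i)) :
    False := by
  obtain ⟨h0V, h0H, hgen, hdist, hdist0, hadj, hstep⟩ := hp
  have e1 : i - 1 + 1 = i := by omega
  have e2 : i - 1 - 1 = i - 2 := by omega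
  have sX2 : SepX (p i) (p (i-2)) (p (i-1)) := h2.elim And.right And.right
  have sX1 : SepX (p (i+1)) (p (i-1)) (p i) := h1.elim And.right And.right
  have sXD : SepX (p (i+1)) (p (i-2)) (p (i-1)) :=
    ⟨lt_of_le_of_lt (le_min (min_le_right _ _) sX2.1.le) sX1.1,
     lt_of_lt_of_le sX1.2 (max_le (le_max_right _ _) sX2.2.le)⟩
  obtain ⟨sepI, extI, rcI, nonI⟩ := hstep i (by omega) hiN
  obtain ⟨sepI1, extI1, rcI1, nonI1⟩ := hstep (i-1) (by omega) (by omega)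
  rw [e1, e2] at rcI1
  have colDC : SameCol V (p (i+1)).1 (p i).1 := rcI.1 h1
  have colCB : SameCol V (p i).1 (p (i-1)).1 := rcI1.1 h2
  have colDB : SameCol V (p (i+1)).1 (p (i-1)).1 :=
    fun h hh => (colDC h hh).trans (colCB h hh)
  have hy1 : (p (i+1)).2 ≠ (p (i-1)).2 :=
    (hdist (i+1) (i-1) (by omega) hiN (by omega) (by omega) (by omega)).2
  have hy2 : (p (i+1)).2 ≠ (p (i-2)).2 := by
    rcases eq_or_lt_of_le (show 2 ≤ i from hi) with h | h
    · have h0 : i - 2 = 0 := by omega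
      rw [h0]
      exact (hdist0 (i+1) (by omega) hiN).2
    · exact (hdist (i+1) (i-2) (by omega) hiN (by omega) (by omega) (by omega)).2
  have hni := nonI (i-1) (by omega) (by omega)
  rw [e2] at hni
  have hext := extI (i-1) (by omega) (by omega)
  rw [e2] at hext
  have main : ¬ SepY (p (i+1)) (p (i-2)) (p (i-1)) → False := fun hnsy =>
    hni ⟨Or.inl sXD,
      ⟨fun _ => colDB, fun hlr => absurd (hlr.elim And.right And.right) hnsy⟩,
      fun j' hj1 hj2 => extI j' hj1 (by omega)⟩
  rcases lt_trichotomy (p (i+1)).2 (min (p (i-2)).2 (p (i-1)).2) with hlt | heq | hgt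
  · exact main fun hsy => absurd hsy.1 (not_lt.2 hlt.le)
  · rcases min_cases (p (i-2)).2 (p (i-1)).2 with ⟨h, _⟩ | ⟨h, _⟩
    · exact hy2 (heq.trans h)
    · exact hy1 (heq.trans h)
  · rcases lt_trichotomy (p (i+1)).2 (max (p (i-2)).2 (p (i-1)).2) with hlt2 | heq2 | hgt2
    · exact hext ⟨sXD.1.le, sXD.2.le, hgt.le, hlt2.le⟩
    · rcases max_cases (p (i-2)).2 (p (i-1)).2 with ⟨h, _⟩ | ⟨h, _⟩
      · exact hy2 (heq2.trans h)
      · exact hy1 (heq2.trans h)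
    · exact main fun hsy => absurd hsy.2 (not_lt.2 hgt2.le)

/-- **Lemma.**  In a grid pin sequence, for every `i > 1` the pin `p (i+1)`
cannot lie in the same or the opposite direction as `p i`: they cannot both be
horizontal (left/right) pins nor both be vertical (up/down) pins. -/
theorem pin_direction_alternates (V H : Set ℝ) (hV : V.Finite) (hH : H.Finite)
    (p : ℕ → ℝ × ℝ) (N : ℕ) (hp : IsGridPinSeq V H p N)
    (i : ℕ) (hi : 1 < i) (hiN : i + 1 ≤ N) :
    ¬ ((IsLeftP (p (i-1)) (p i) (p (i+1)) ∨ IsRightP (p (i-1)) (p i) (p (i+1))) ∧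
       (IsLeftP (p (i-2)) (p (i-1)) (p i) ∨ IsRightP (p (i-2)) (p (i-1)) (p i))) ∧
    ¬ ((IsUpP (p (i-1)) (p i) (p (i+1)) ∨ IsDownP (p (i-1)) (p i) (p (i+1))) ∧
       (IsUpP (p (i-2)) (p (i-1)) (p i) ∨ IsDownP (p (i-2)) (p (i-1)) (p i))) := by
  exact ⟨fun ⟨h1, h2⟩ => key_h V H p N hp i hi hiN h1 h2,
         fun ⟨h1, h2⟩ => key_v V H p N hp i hi hiN h1 h2⟩
end
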